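/- arXiv:1407.0233 — 11 statements merged into one kernel-verified Lean document; each statement's English description precedes it below -/
import Mathlib

section
/- Let f : ℝ → ℝ be continuous on the closed interval [0,1]. Then there exists a real number a such that the Lebesgue integral ∫⁻ x in Set.Icc 0 1, (ENNReal.ofReal |f x - a|)⁻¹ with respect to the volume measure equals ∞ (i.e., the integral ∫₀¹ dx / |f(x) − a| diverges). -/
open MeasureTheory Set
open scoped ENNReal
set_option maxHeartbeats 1000000 in

theorem divergent_integral_exists (f : ℝ → ℝ) (hf : ContinuousOn f (Set.Icc 0 1)) :
    ∃ a : ℝ, ∫⁻ x in Set.Icc (0:ℝ) 1, (ENNReal.ofReal |f x - a|)⁻¹ = ⊤ := by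
  classical
  set μ := volume.restrict (Set.Icc (0:ℝ) 1) with hμdef
  set m := sInf (f '' Set.Icc (0:ℝ) 1) with hmdef
  set M := sSup (f '' Set.Icc (0:ℝ) 1) with hMdef
  set L := max (M - m) 1 with hLdef
  have hL1 : (1:ℝ) ≤ L := le_max_right _ _
  have hL0 : (0:ℝ) < L := lt_of_lt_of_le one_pos hL1
  -- base case of the measure bound
  have hbase : ((2:ℝ≥0∞)⁻¹)^(0:ℕ) ≤ μ {x | f x ∈ Icc m (m + L / 2 ^ (0:ℕ))} := by
    have hsub : Set.Icc (0:ℝ) 1 ⊆ {x | f x ∈ Icc m (m + L / 2 ^ (0:ℕ))} := by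
      intro x hx
      have h1 : m ≤ f x := hf.sInf_image_Icc_le hx
      have h2 : f x ≤ M := hf.le_sSup_image_Icc hx
      have h3 : M - m ≤ L := le_max_left _ _
      constructor
      · exact h1
      · simp only [pow_zero, div_one]; linarith
    have h1 : μ (Set.Icc (0:ℝ) 1) = 1 := by
      rw [hμdef, Measure.restrict_apply' measurableSet_Icc, Set.inter_self,
        Real.volume_Icc]
      norm_num
    calc ((2:ℝ≥0∞)⁻¹)^(0:ℕ) = 1 := by norm_num
    _ = μ (Set.Icc (0:ℝ) 1) := h1.symm
    _ ≤ _ := measure_mono hsub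
  -- bisection step
  have step : ∀ (k : ℕ) (c : ℝ), ((2:ℝ≥0∞)⁻¹)^k ≤ μ {x | f x ∈ Icc c (c + L / 2 ^ k)} →
      ∃ c', c ≤ c' ∧ c' + L / 2 ^ (k+1) ≤ c + L / 2 ^ k ∧
        ((2:ℝ≥0∞)⁻¹)^(k+1) ≤ μ {x | f x ∈ Icc c' (c' + L / 2 ^ (k+1))} := by
    intro k c hk
    have hd : L / 2 ^ (k+1) + L / 2 ^ (k+1) = L / 2 ^ k := by
      rw [pow_succ]; ring
    set c'' := c + L / 2 ^ (k+1) with hc''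
    have hsplit : {x | f x ∈ Icc c (c + L / 2 ^ k)} ⊆
        {x | f x ∈ Icc c (c + L / 2 ^ (k+1))} ∪ {x | f x ∈ Icc c'' (c'' + L / 2 ^ (k+1))} := by
      intro x hx
      rcases le_total (f x) (c + L / 2 ^ (k+1)) with h | h
      · exact Or.inl ⟨hx.1, h⟩
      · refine Or.inr ⟨h, ?_⟩
        have := hx.2
        rw [hc'']
        linarith [hd]
    have hle : ((2:ℝ≥0∞)⁻¹)^k ≤ μ {x | f x ∈ Icc c (c + L / 2 ^ (k+1))} +
        μ {x | f x ∈ Icc c'' (c'' + L / 2 ^ (k+1))} :=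
      hk.trans ((measure_mono hsplit).trans (measure_union_le _ _))
    have hhalf : ((2:ℝ≥0∞)⁻¹)^(k+1) ≤ μ {x | f x ∈ Icc c (c + L / 2 ^ (k+1))} ∨
        ((2:ℝ≥0∞)⁻¹)^(k+1) ≤ μ {x | f x ∈ Icc c'' (c'' + L / 2 ^ (k+1))} := by
      by_contra h
      push_neg at h
      have h2 : μ {x | f x ∈ Icc c (c + L / 2 ^ (k+1))} +
          μ {x | f x ∈ Icc c'' (c'' + L / 2 ^ (k+1))} <
          ((2:ℝ≥0∞)⁻¹)^(k+1) + ((2:ℝ≥0∞)⁻¹)^(k+1) :=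
        ENNReal.add_lt_add h.1 h.2
      have h3 : ((2:ℝ≥0∞)⁻¹)^(k+1) + ((2:ℝ≥0∞)⁻¹)^(k+1) = ((2:ℝ≥0∞)⁻¹)^k := by
        rw [pow_succ, ← mul_two, mul_assoc, ENNReal.inv_mul_cancel two_ne_zero ENNReal.ofNat_ne_top,
          mul_one]
      rw [h3] at h2
      exact absurd hle (not_le.mpr h2)
    rcases hhalf with h | h
    · refine ⟨c, le_refl _, ?_, h⟩
      linarith [hd, div_pos hL0 (pow_pos two_pos (k+1))]
    · refine ⟨c'', le_add_of_nonneg_right (le_of_lt (div_pos hL0 (pow_pos two_pos (k+1)))), ?_, h⟩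
      rw [hc'']; linarith [hd]
  -- total choice function
  have step' : ∀ p : ℕ × ℝ, ∃ c' : ℝ,
      (((2:ℝ≥0∞)⁻¹)^p.1 ≤ μ {x | f x ∈ Icc p.2 (p.2 + L / 2 ^ p.1)} →
        (p.2 ≤ c' ∧ c' + L / 2 ^ (p.1+1) ≤ p.2 + L / 2 ^ p.1 ∧
          ((2:ℝ≥0∞)⁻¹)^(p.1+1) ≤ μ {x | f x ∈ Icc c' (c' + L / 2 ^ (p.1+1))})) := by
    intro p
    by_cases h : ((2:ℝ≥0∞)⁻¹)^p.1 ≤ μ {x | f x ∈ Icc p.2 (p.2 + L / 2 ^ p.1)}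
    · obtain ⟨c', hc'⟩ := step p.1 p.2 h
      exact ⟨c', fun _ => hc'⟩
    · exact ⟨p.2, fun h' => absurd h' h⟩
  -- build the nested sequence, then make it opaque
  obtain ⟨c, hc0, hmono, inv⟩ : ∃ c : ℕ → ℝ, c 0 = m ∧
      (∀ k, c k ≤ c (k+1) ∧ c (k+1) + L / 2 ^ (k+1) ≤ c k + L / 2 ^ k) ∧
      ∀ k, ((2:ℝ≥0∞)⁻¹)^k ≤ μ {x | f x ∈ Icc (c k) (c k + L / 2 ^ k)} := by
    choose g hg using step'
    refine ⟨fun k => Nat.rec (motive := fun _ => ℝ) m (fun k ck => g (k, ck)) k, rfl, ?_, ?_⟩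
    all_goals
      have inv : ∀ k, ((2:ℝ≥0∞)⁻¹)^k ≤ μ {x | f x ∈ Icc
          ((fun k => Nat.rec (motive := fun _ => ℝ) m (fun k ck => g (k, ck)) k) k)
          ((fun k => Nat.rec (motive := fun _ => ℝ) m (fun k ck => g (k, ck)) k) k + L / 2 ^ k)} := by
        intro k
        induction k with
        | zero => exact hbase
        | succ k ih => exact (hg (k, _) ih).2.2
    · exact fun k => ⟨(hg (k, _) (inv k)).1, (hg (k, _) (inv k)).2.1⟩
    · exact inv
  have nest : ∀ k j, k ≤ j → c k ≤ c j ∧ c j + L / 2 ^ j ≤ c k + L / 2 ^ k := by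
    intro k j hkj
    induction j, hkj using Nat.le_induction with
    | base => exact ⟨le_refl _, le_refl _⟩
    | succ j hkj ih =>
      exact ⟨ih.1.trans (hmono j).1, (hmono j).2.trans ih.2⟩
  -- a point in the intersection of the nested intervals
  obtain ⟨a, ha1, ha2⟩ : ∃ a : ℝ, (∀ k, c k ≤ a) ∧ ∀ k, a ≤ c k + L / 2 ^ k := by
    have hbdd : BddAbove (Set.range c) := by
      refine ⟨m + L, ?_⟩
      rintro _ ⟨j, rfl⟩
      have h1 := (nest 0 j (Nat.zero_le j)).2
      have h2 : (0:ℝ) ≤ L / 2 ^ j := le_of_lt (div_pos hL0 (pow_pos two_pos j))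
      rw [hc0] at h1
      simp only [pow_zero, div_one] at h1
      linarith
    refine ⟨⨆ k, c k, fun k => le_ciSup hbdd k, fun k => ?_⟩
    refine ciSup_le fun j => ?_
    rcases le_total k j with h | h
    · have h1 := (nest k j h).2
      have h2 : (0:ℝ) ≤ L / 2 ^ j := le_of_lt (div_pos hL0 (pow_pos two_pos j))
      linarith
    · have h1 := (nest j k h).1
      have h2 : (0:ℝ) ≤ L / 2 ^ k := le_of_lt (div_pos hL0 (pow_pos two_pos k))
      linarith
  refine ⟨a, ?_⟩
  -- key measure bound on the sublevel sets
  set S : ℕ → Set ℝ := fun k => (fun x => |f x - a|) ⁻¹' Set.Iic (L / 2 ^ k) with hSdef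
  have hSmeas : ∀ k, NullMeasurableSet (S k) μ := by
    intro k
    have habs : AEMeasurable (fun x => |f x - a|) μ :=
      ((hf.sub continuousOn_const).abs).aemeasurable measurableSet_Icc
    exact habs.nullMeasurable measurableSet_Iic
  have hSbound : ∀ k, ((2:ℝ≥0∞)⁻¹)^k ≤ μ (S k) := by
    intro k
    refine (inv k).trans (measure_mono ?_)
    intro x hx
    have h1 := ha1 k
    have h2 := ha2 k
    have h3 := hx.1
    have h4 := hx.2
    show |f x - a| ≤ L / 2 ^ k
    rw [abs_sub_le_iff]
    constructor <;> linarith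
  -- the auxiliary functions
  set G : ℕ → ℝ → ℝ≥0∞ := fun k => (S k).indicator (fun _ => (2:ℝ≥0∞)^k) with hGdef
  have hGmeas : ∀ k, AEMeasurable (G k) μ := by
    intro k
    rw [hGdef]
    exact (aemeasurable_indicator_iff₀ (hSmeas k)).mpr aemeasurable_const
  -- pointwise bound
  have hgeom : ∀ n : ℕ, (∑ k ∈ Finset.range n, (2:ℝ≥0∞)^k) + 1 = 2^n := by
    intro n
    induction n with
    | zero => simp
    | succ n ih =>
      rw [Finset.sum_range_succ, add_right_comm, ih, pow_succ, mul_two]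
  have hpt : ∀ x, x ∈ Set.Icc (0:ℝ) 1 →
      (∑' k, G k x) ≤ ENNReal.ofReal (2*L) * (ENNReal.ofReal |f x - a|)⁻¹ := by
    intro x hx
    have htL : |f x - a| ≤ L := by
      have h1 : m ≤ f x := hf.sInf_image_Icc_le hx
      have h2 : f x ≤ M := hf.le_sSup_image_Icc hx
      have h3 : M - m ≤ L := le_max_left _ _
      have h4 : m ≤ a := by have := ha1 0; rw [hc0] at this; linarith
      have h5 : a ≤ m + L := by
        have := ha2 0
        rw [hc0] at this
        simp only [pow_zero, div_one] at this
        linarith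
      rw [abs_sub_le_iff]
      constructor <;> linarith
    rcases eq_or_lt_of_le (abs_nonneg (f x - a)) with h0 | h0
    · rw [← h0]
      simp only [ENNReal.ofReal_zero, ENNReal.inv_zero]
      rw [ENNReal.mul_top (by positivity)]
      exact le_top
    · set t := |f x - a| with htdef
      have hex : ∃ n : ℕ, L / t < (2:ℝ)^n := pow_unbounded_of_one_lt (L / t) one_lt_two
      set n := Nat.find hex with hndef
      have hn : L / t < (2:ℝ)^n := Nat.find_spec hex
      -- support of the sum is contained in range n
      have hsupp : ∀ k, k ∉ Finset.range n → G k x = 0 := by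
        intro k hk
        rw [Finset.mem_range, not_lt] at hk
        have hxk : x ∉ S k := by
          intro hxS
          have h1 : t ≤ L / 2 ^ k := hxS
          have h2 : (2:ℝ)^k ≤ L / t := by
            rw [le_div_iff₀ h0]
            rw [le_div_iff₀ (pow_pos two_pos k)] at h1
            linarith
          have h3 : (2:ℝ)^n ≤ (2:ℝ)^k := pow_le_pow_right₀ one_le_two hk
          linarith
        exact Set.indicator_of_notMem hxk _
      rw [tsum_eq_sum hsupp]
      -- bound the finite sum
      have hsum : (∑ k ∈ Finset.range n, G k x) ≤ (2:ℝ≥0∞)^n := by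
        calc (∑ k ∈ Finset.range n, G k x) ≤ ∑ k ∈ Finset.range n, (2:ℝ≥0∞)^k :=
              Finset.sum_le_sum fun k _ => Set.indicator_le_self _ _ x
        _ ≤ (∑ k ∈ Finset.range n, (2:ℝ≥0∞)^k) + 1 := le_self_add
        _ = 2^n := hgeom n
      refine hsum.trans ?_
      -- now show 2^n ≤ ofReal (2L) * (ofReal t)⁻¹
      have hrhs : ENNReal.ofReal (2*L) * (ENNReal.ofReal t)⁻¹ = ENNReal.ofReal (2*L/t) := by
        rw [ENNReal.ofReal_div_of_pos h0, div_eq_mul_inv]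
      rw [hrhs]
      have h2n : ((2:ℝ≥0∞))^n = ENNReal.ofReal ((2:ℝ)^n) := by
        rw [ENNReal.ofReal_pow (by norm_num)]
        norm_num
      rw [h2n]
      refine ENNReal.ofReal_le_ofReal ?_
      -- (2:ℝ)^n ≤ 2*L/t
      rcases Nat.eq_zero_or_pos n with hn0 | hn0
      · exfalso
        rw [hn0, pow_zero] at hn
        have : (1:ℝ) ≤ L / t := (one_le_div h0).mpr htL
        linarith
      · obtain ⟨p, hp⟩ := Nat.exists_eq_succ_of_ne_zero (Nat.pos_iff_ne_zero.mp hn0)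
        have hmin : ¬ (L / t < (2:ℝ)^p) := Nat.find_min hex (by omega)
        push_neg at hmin
        rw [hp, pow_succ]
        have : 2 * L / t = 2 * (L / t) := by ring
        rw [this]
        nlinarith
  -- put everything together
  have h1 : (∑' k, ∫⁻ x, G k x ∂μ) = ⊤ := by
    have hone : ∀ k : ℕ, (1:ℝ≥0∞) ≤ ∫⁻ x, G k x ∂μ := by
      intro k
      rw [hGdef]
      rw [lintegral_indicator₀ (hSmeas k), setLIntegral_const]
      calc (1:ℝ≥0∞) = (2:ℝ≥0∞)^k * ((2:ℝ≥0∞)⁻¹)^k := by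
            rw [← ENNReal.inv_pow, ENNReal.mul_inv_cancel (by positivity)
              (by simp [ENNReal.pow_ne_top])]
      _ ≤ (2:ℝ≥0∞)^k * μ (S k) := by
            exact mul_le_mul_right (hSbound k) _
    refine top_unique ?_
    calc (⊤:ℝ≥0∞) = ∑' (k : ℕ), (1:ℝ≥0∞) :=
          (ENNReal.tsum_const_eq_top_of_ne_zero one_ne_zero).symm
    _ ≤ ∑' k, ∫⁻ x, G k x ∂μ := ENNReal.tsum_le_tsum hone
  have h2 : (∑' k, ∫⁻ x, G k x ∂μ) ≤ ENNReal.ofReal (2*L) *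
      ∫⁻ x, (ENNReal.ofReal |f x - a|)⁻¹ ∂μ := by
    rw [← lintegral_tsum hGmeas]
    calc (∫⁻ x, ∑' k, G k x ∂μ) ≤
        ∫⁻ x, ENNReal.ofReal (2*L) * (ENNReal.ofReal |f x - a|)⁻¹ ∂μ := by
          refine lintegral_mono_ae ?_
          filter_upwards [ae_restrict_mem measurableSet_Icc] with x hx using hpt x hx
    _ = ENNReal.ofReal (2*L) * ∫⁻ x, (ENNReal.ofReal |f x - a|)⁻¹ ∂μ :=
        lintegral_const_mul' _ _ ENNReal.ofReal_ne_top
  rw [h1] at h2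
  by_contra hne
  exact absurd h2 (by
    simp only [top_le_iff]
    exact ENNReal.mul_ne_top ENNReal.ofReal_ne_top hne)
end

section
/- Let g : ℝ → ℝ be antitone (nonincreasing) on the closed interval [0,1]. Then there exists a real number a such that the Lebesgue integral ∫⁻ x in Set.Icc 0 1, (ENNReal.ofReal |g x - a|)⁻¹ with respect to the volume measure equals ∞ (i.e., the integral ∫₀¹ dx / |g(x) − a| diverges). -/
open MeasureTheory

theorem divergent_integral_exists_antitone (g : ℝ → ℝ) (hg : AntitoneOn g (Set.Icc 0 1)) :
    ∃ a : ℝ, ∫⁻ x in Set.Icc (0:ℝ) 1, (ENNReal.ofReal |g x - a|)⁻¹ = ⊤ := by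
  classical
  -- extend g to an antitone function on all of ℝ via clamping
  set cl : ℝ → ℝ := fun x => max 0 (min x 1) with hcl_def
  have hcl_mem : ∀ x, cl x ∈ Set.Icc (0:ℝ) 1 := by
    intro x
    constructor
    · exact le_max_left _ _
    · exact max_le (by norm_num) (min_le_right _ _)
  have hcl_eq : ∀ x ∈ Set.Icc (0:ℝ) 1, cl x = x := by
    intro x hx
    simp only [hcl_def]
    rw [min_eq_left hx.2, max_eq_right hx.1]
  have hcl_mono : Monotone cl := fun x y hxy =>
    max_le_max le_rfl (min_le_min hxy le_rfl)
  set F : ℝ → ℝ := fun x => -g (cl x) with hF_def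
  have hF : Monotone F := by
    intro x y hxy
    simp only [hF_def, neg_le_neg_iff]
    exact hg (hcl_mem x) (hcl_mem y) (hcl_mono hxy)
  -- find a point c ∈ (0,1) where F is differentiable
  have hdiff := hF.ae_differentiableAt
  have h0meas : volume {x : ℝ | ¬ DifferentiableAt ℝ F x} = 0 := by
    exact hdiff
  have hne : (Set.Ioo (0:ℝ) 1 ∩ {x | DifferentiableAt ℝ F x}).Nonempty := by
    apply MeasureTheory.nonempty_of_measure_ne_zero (μ := volume)
    intro h
    have hsub : Set.Ioo (0:ℝ) 1 ⊆
        (Set.Ioo (0:ℝ) 1 ∩ {x | DifferentiableAt ℝ F x}) ∪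
          {x : ℝ | ¬ DifferentiableAt ℝ F x} := by
      intro x hx
      by_cases hdx : DifferentiableAt ℝ F x
      · exact Or.inl ⟨hx, hdx⟩
      · exact Or.inr hdx
    have hle := (measure_mono (μ := volume) hsub).trans (measure_union_le _ _)
    rw [h, h0meas, add_zero] at hle
    simp [Real.volume_Ioo] at hle
  obtain ⟨c, hc01, hcd⟩ := hne
  have hc0 : (0:ℝ) < c := hc01.1
  have hc1 : c < 1 := hc01.2
  have hcIcc : c ∈ Set.Icc (0:ℝ) 1 := ⟨hc0.le, hc1.le⟩
  set d : ℝ := deriv F c with hd_def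
  have hder : HasDerivAt F d c := hcd.hasDerivAt
  have hslope := hasDerivAt_iff_tendsto_slope.mp hder
  have hev : ∀ᶠ x in nhdsWithin c {c}ᶜ, slope F c x < d + 1 :=
    hslope.eventually (eventually_lt_nhds (lt_add_one d))
  rw [eventually_nhdsWithin_iff, Metric.eventually_nhds_iff] at hev
  obtain ⟨ε, hε, hev⟩ := hev
  set K : ℝ := |d| + 1 with hK_def
  have hK : 0 < K := by positivity
  set h0 : ℝ := min (ε / 2) (1 - c) with hh0_def
  have hh0 : 0 < h0 := lt_min (by linarith) (by linarith)
  have hh0le : c + h0 ≤ 1 := by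
    have := min_le_right (ε / 2) (1 - c)
    simp only [hh0_def]
    linarith
  -- key slope estimate
  have key : ∀ h : ℝ, 0 < h → h ≤ h0 → g c - g (c + h) ≤ K * h := by
    intro h hh hhle
    have hxIcc : c + h ∈ Set.Icc (0:ℝ) 1 := ⟨by linarith, by linarith⟩
    have hdist : dist (c + h) c < ε := by
      rw [Real.dist_eq]
      have : h ≤ ε / 2 := hhle.trans (min_le_left _ _)
      rw [abs_of_pos (by linarith : (0:ℝ) < c + h - c)]
      linarith
    have hne' : c + h ∈ ({c}ᶜ : Set ℝ) := by
      simp only [Set.mem_compl_iff, Set.mem_singleton_iff]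
      intro hEq
      nlinarith
    have hsl := hev hdist hne'
    rw [slope_def_field] at hsl
    simp only [hF_def] at hsl
    rw [hcl_eq _ hxIcc, hcl_eq _ hcIcc, show c + h - c = h by ring] at hsl
    have hdiv : (-g (c + h) - -g c) / h < d + 1 := hsl
    have h1 : -g (c + h) - -g c < (d + 1) * h := by
      have := (div_lt_iff₀ hh).mp hdiv
      linarith
    have h2 : (d + 1) * h ≤ K * h := by
      have : d + 1 ≤ K := by
        simp only [hK_def]
        have := le_abs_self d
        linarith
      exact mul_le_mul_of_nonneg_right this hh.le
    nlinarith
  -- the annuli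
  refine ⟨g c, ?_⟩
  set S : ℕ → Set ℝ := fun m => Set.Ioc (c + h0 / 4 ^ (m + 1)) (c + h0 / 4 ^ m) with hS_def
  have hSmeas : ∀ m, MeasurableSet (S m) := fun m => measurableSet_Ioc
  have hstep : ∀ m n : ℕ, m < n → ∀ x, x ∈ S m → x ∈ S n → False := by
    intro m n hmn x hxm hxn
    have hpow : (4:ℝ) ^ (m + 1) ≤ 4 ^ n := by
      apply pow_le_pow_right₀ (by norm_num)
      omega
    have : h0 / 4 ^ n ≤ h0 / 4 ^ (m + 1) :=
      div_le_div_of_nonneg_left hh0.le (by positivity) hpow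
    have h1 := hxm.1
    have h2 := hxn.2
    linarith [hxm.1, hxn.2]
  have hdisj : Pairwise (Function.onFun Disjoint S) := by
    intro m n hmn
    rcases hmn.lt_or_gt with h | h
    · exact Set.disjoint_left.mpr fun x hx hx' => hstep m n h x hx hx'
    · exact Set.disjoint_left.mpr fun x hx hx' => hstep n m h x hx' hx
  have hsub : (⋃ m, S m) ⊆ Set.Icc (0:ℝ) 1 := by
    intro x hx
    obtain ⟨m, hm⟩ := Set.mem_iUnion.mp hx
    simp only [hS_def, Set.mem_Ioc] at hm
    have hpow1 : (1:ℝ) ≤ 4 ^ m := (one_le_pow₀ (by norm_num : (1:ℝ) ≤ 4) : (1:ℝ) ≤ 4 ^ m)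
    have hle : h0 / 4 ^ m ≤ h0 := by
      rw [div_le_iff₀ (by positivity)]
      nlinarith
    have hp : 0 < h0 / 4 ^ (m + 1) := by positivity
    constructor
    · linarith [hm.1]
    · linarith [hm.2]
  -- bound on each annulus
  have hannulus : ∀ m : ℕ, ENNReal.ofReal (3 / (4 * K)) ≤
      ∫⁻ x in S m, (ENNReal.ofReal |g x - g c|)⁻¹ := by
    intro m
    set t : ℝ := h0 / 4 ^ m with ht_def
    have ht : 0 < t := by positivity
    have htle : t ≤ h0 := by
      rw [ht_def, div_le_iff₀ (by positivity)]
      nlinarith [(one_le_pow₀ (by norm_num : (1:ℝ) ≤ 4) : (1:ℝ) ≤ 4 ^ m)]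
    have ht4 : h0 / 4 ^ (m + 1) = t / 4 := by
      rw [ht_def, pow_succ]
      ring
    have hbound : ∀ x ∈ S m, (ENNReal.ofReal (K * t))⁻¹ ≤ (ENNReal.ofReal |g x - g c|)⁻¹ := by
      intro x hx
      simp only [hS_def, Set.mem_Ioc] at hx
      have hp : 0 < h0 / 4 ^ (m + 1) := by positivity
      have hcx : c < x := by linarith [hx.1]
      have hxIcc : x ∈ Set.Icc (0:ℝ) 1 := ⟨by linarith, by linarith [hx.2]⟩
      have hctIcc : c + t ∈ Set.Icc (0:ℝ) 1 := ⟨by linarith, by linarith⟩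
      have hgle : g x ≤ g c := hg hcIcc hxIcc hcx.le
      have habs : |g x - g c| = g c - g x := by
        rw [abs_of_nonpos (by linarith)]
        ring
      have h1 : g c - g x ≤ g c - g (c + t) := by
        have := hg hxIcc hctIcc (by linarith [hx.2] : x ≤ c + t)
        linarith
      have h2 : g c - g (c + t) ≤ K * t := key t ht htle
      apply ENNReal.inv_le_inv.mpr
      apply ENNReal.ofReal_le_ofReal
      rw [habs]
      linarith
    calc ENNReal.ofReal (3 / (4 * K))
        = (ENNReal.ofReal (K * t))⁻¹ * volume (S m) := by
          rw [show volume (S m) = ENNReal.ofReal ((c + h0 / 4 ^ m) - (c + h0 / 4 ^ (m + 1))) from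
            Real.volume_Ioc]
          rw [← ENNReal.ofReal_inv_of_pos (by positivity : (0:ℝ) < K * t)]
          rw [← ENNReal.ofReal_mul (by positivity)]
          congr 1
          rw [ht4]
          rw [show c + t - (c + t / 4) = 3 / 4 * t by ring]
          field_simp
      _ = ∫⁻ _ in S m, (ENNReal.ofReal (K * t))⁻¹ := by
          rw [setLIntegral_const]
      _ ≤ ∫⁻ x in S m, (ENNReal.ofReal |g x - g c|)⁻¹ :=
          setLIntegral_mono' (hSmeas m) hbound
  -- conclude
  rw [eq_top_iff]
  calc (⊤ : ENNReal) = ∑' (_ : ℕ), ENNReal.ofReal (3 / (4 * K)) := by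
        rw [ENNReal.tsum_const_eq_top_of_ne_zero]
        simp only [ne_eq, ENNReal.ofReal_eq_zero, not_le]
        positivity
    _ ≤ ∑' m : ℕ, ∫⁻ x in S m, (ENNReal.ofReal |g x - g c|)⁻¹ :=
        ENNReal.tsum_le_tsum hannulus
    _ = ∫⁻ x in ⋃ m, S m, (ENNReal.ofReal |g x - g c|)⁻¹ :=
        (lintegral_iUnion hSmeas hdisj _).symm
    _ ≤ ∫⁻ x in Set.Icc (0:ℝ) 1, (ENNReal.ofReal |g x - g c|)⁻¹ :=
        lintegral_mono_set hsub
end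

section
/- Let g : ℝ → ℝ and let p be a point of the open interval (0,1) at which g is differentiable. Then the Lebesgue integral ∫⁻ x in Set.Icc 0 1, (ENNReal.ofReal |g x - g p|)⁻¹ with respect to the volume measure equals ∞ (i.e., the integral ∫₀¹ dx / |g(x) − g(p)| diverges, since near p one has |g(x) − g(p)| ≤ (|g′(p)| + 1)·|x − p|). -/
open MeasureTheory

theorem divergent_integral_at_differentiability_point (g : ℝ → ℝ) (p : ℝ)
    (hp : p ∈ Set.Ioo (0:ℝ) 1) (hg : DifferentiableAt ℝ g p) :
    ∫⁻ x in Set.Icc (0:ℝ) 1, (ENNReal.ofReal |g x - g p|)⁻¹ = ⊤ := by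
  obtain ⟨hp0, hp1⟩ := hp
  set d := deriv g p with hd
  -- local Lipschitz-type bound
  have hlo : (fun x => g x - g p - (x - p) * d) =o[nhds p] fun x => x - p := by
    have := (hg.hasDerivAt).isLittleO
    simpa [smul_eq_mul] using this
  have hbound := hlo.bound one_pos
  rw [Metric.eventually_nhds_iff] at hbound
  obtain ⟨ε, hε, hball⟩ := hbound
  set C : ℝ := |d| + 1 with hC
  have hCpos : 0 < C := by positivity
  set δ : ℝ := min (ε / 2) (1 - p) with hδdef
  have hδpos : 0 < δ := lt_min (by linarith) (by linarith)
  have hδε : δ < ε := lt_of_le_of_lt (min_le_left _ _) (by linarith)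
  have hsub : Set.Ioo p (p + δ) ⊆ Set.Icc (0:ℝ) 1 := by
    intro x hx
    have h1 : δ ≤ 1 - p := min_le_right _ _
    exact ⟨by linarith [hx.1], by linarith [hx.2]⟩
  have key : ∀ x ∈ Set.Ioo p (p + δ), |g x - g p| ≤ C * (x - p) := by
    intro x hx
    have hxp : 0 < x - p := by linarith [hx.1]
    have hdist : dist x p < ε := by
      rw [Real.dist_eq, abs_of_pos hxp]; linarith [hx.2]
    have := hball hdist
    simp only [Real.norm_eq_abs, one_mul] at this
    have h1 : |g x - g p| ≤ |g x - g p - (x - p) * d| + |(x - p) * d| := by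
      have := abs_sub_abs_le_abs_sub (g x - g p) ((x - p) * d)
      have h2 := abs_add_le (g x - g p - (x - p) * d) ((x - p) * d)
      calc |g x - g p| = |(g x - g p - (x - p) * d) + (x - p) * d| := by ring_nf
        _ ≤ _ := h2
    have h4 : |x - p| = x - p := abs_of_pos hxp
    calc |g x - g p| ≤ |g x - g p - (x - p) * d| + |(x - p) * d| := h1
      _ ≤ |x - p| + |(x - p) * d| := by linarith [this]
      _ = (x - p) + (x - p) * |d| := by rw [abs_mul, h4]
      _ = C * (x - p) := by rw [hC]; ring
  -- reduce to divergence of (C*(x-p))⁻¹ on Ioo p (p+δ)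
  have hmain : ∫⁻ x in Set.Ioo p (p + δ), (ENNReal.ofReal (C * (x - p)))⁻¹ = ⊤ := by
    by_contra h
    have hmeas : Measurable fun x : ℝ => (ENNReal.ofReal (C * (x - p)))⁻¹ :=
      (ENNReal.measurable_ofReal.comp (by fun_prop)).inv
    have hint : Integrable (fun x => ((ENNReal.ofReal (C * (x - p)))⁻¹).toReal)
        (volume.restrict (Set.Ioo p (p + δ))) :=
      integrable_toReal_of_lintegral_ne_top hmeas.aemeasurable h
    have hint2 : IntegrableOn (fun x => (C * (x - p))⁻¹) (Set.Ioo p (p + δ)) := by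
      refine hint.congr ?_
      filter_upwards [ae_restrict_mem measurableSet_Ioo] with x hx
      have hxp : 0 ≤ C * (x - p) := by
        have : 0 < x - p := by linarith [hx.1]
        positivity
      rw [ENNReal.toReal_inv, ENNReal.toReal_ofReal hxp]
    have hint3 : IntegrableOn (fun x => (x - p)⁻¹) (Set.Ioo p (p + δ)) := by
      refine (hint2.smul C).congr ?_
      filter_upwards [ae_restrict_mem measurableSet_Ioo] with x hx
      have hxp : x - p ≠ 0 := by have := hx.1; intro hcon; linarith
      have hCne : C ≠ 0 := ne_of_gt hCpos
      simp only [Pi.smul_apply, smul_eq_mul, mul_inv]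
      field_simp
    have hii : IntervalIntegrable (fun x => (x - p)⁻¹) volume p (p + δ) := by
      rw [intervalIntegrable_iff_integrableOn_Ioo_of_le (by linarith)]
      exact hint3
    rw [intervalIntegrable_sub_inv_iff] at hii
    rcases hii with h1 | h2
    · linarith
    · exact h2 (Set.left_mem_uIcc)
  refine top_le_iff.1 ?_
  calc (⊤ : ENNReal) = ∫⁻ x in Set.Ioo p (p + δ), (ENNReal.ofReal (C * (x - p)))⁻¹ := hmain.symm
    _ ≤ ∫⁻ x in Set.Ioo p (p + δ), (ENNReal.ofReal |g x - g p|)⁻¹ := by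
        refine setLIntegral_mono' measurableSet_Ioo fun x hx => ?_
        exact ENNReal.inv_le_inv.2 (ENNReal.ofReal_le_ofReal (key x hx))
    _ ≤ ∫⁻ x in Set.Icc (0:ℝ) 1, (ENNReal.ofReal |g x - g p|)⁻¹ :=
        lintegral_mono_set hsub
end

section
/- Let f : ℝ → ℝ be continuous on the closed interval [0,1]. Then there exists a function g : ℝ → ℝ that is continuous on [0,1], antitone (nonincreasing) on [0,1], and equimeasurable with f on [0,1] (a decreasing rearrangement of f). -/
open MeasureTheory

section Aux

variable {f : ℝ → ℝ}

/-- An antitone function on `[a,b]` which is surjective onto `[g b, g a]` is continuous. -/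
lemma antitoneOn_surjOn_continuousOn {g : ℝ → ℝ} {a b : ℝ}
    (hg : AntitoneOn g (Set.Icc a b)) (hs : Set.SurjOn g (Set.Icc a b) (Set.Icc (g b) (g a))) :
    ContinuousOn g (Set.Icc a b) := by
  intro x₀ hx₀
  have hab : a ≤ b := le_trans hx₀.1 hx₀.2
  have hba : g b ≤ g a := hg ⟨le_refl a, hab⟩ ⟨hab, le_refl b⟩ hab
  have hga : g x₀ ≤ g a := hg ⟨le_refl a, hab⟩ hx₀ hx₀.1
  have hgb : g b ≤ g x₀ := hg hx₀ ⟨hab, le_refl b⟩ hx₀.2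
  rw [ContinuousWithinAt, tendsto_order]
  constructor
  · intro c hc
    rcases lt_or_ge c (g b) with h | h
    · filter_upwards [self_mem_nhdsWithin] with x hx
      exact lt_of_lt_of_le h (hg hx ⟨hab, le_refl b⟩ hx.2)
    · obtain ⟨c', hcc', hc'⟩ := exists_between hc
      obtain ⟨u, hu, hgu⟩ := hs ⟨le_trans h hcc'.le, le_trans hc'.le hga⟩
      have hx₀u : x₀ < u := by
        by_contra hle
        push_neg at hle
        exact absurd (hg hu hx₀ hle) (by rw [hgu]; exact not_le.2 hc')
      filter_upwards [inter_mem_nhdsWithin (Set.Icc a b) (Iio_mem_nhds hx₀u)] with x hx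
      exact lt_of_lt_of_le hcc' (hgu ▸ hg hx.1 hu hx.2.le)
  · intro c hc
    rcases lt_or_ge (g a) c with h | h
    · filter_upwards [self_mem_nhdsWithin] with x hx
      exact lt_of_le_of_lt (hg ⟨le_refl a, hab⟩ hx hx.1) h
    · obtain ⟨c', hc', hcc'⟩ := exists_between hc
      obtain ⟨u, hu, hgu⟩ := hs ⟨le_trans hgb hc'.le, le_trans hcc'.le h⟩
      have hx₀u : u < x₀ := by
        by_contra hle
        push_neg at hle
        exact absurd (hg hx₀ hu hle) (by rw [hgu]; exact not_le.2 hc')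
      filter_upwards [inter_mem_nhdsWithin (Set.Icc a b) (Ioi_mem_nhds hx₀u)] with x hx
      exact lt_of_le_of_lt (hgu ▸ hg hu hx.1 hx.2.le) hcc'

/-- The distribution function of `f` (as an extended nonneg real). -/
noncomputable def nudist (f : ℝ → ℝ) (y : ℝ) : ENNReal :=
  volume {x ∈ Set.Icc (0:ℝ) 1 | f x > y}

/-- The distribution function of `f` (real-valued). -/
noncomputable def mudist (f : ℝ → ℝ) (y : ℝ) : ℝ :=
  (nudist f y).toReal

lemma sep_eq_inter (y : ℝ) :
    {x ∈ Set.Icc (0:ℝ) 1 | f x > y} = f ⁻¹' (Set.Ioi y) ∩ Set.Icc (0:ℝ) 1 := by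
  ext x; exact ⟨fun h => ⟨h.2, h.1⟩, fun h => ⟨h.2, h.1⟩⟩

lemma exists_open_inter (hf : ContinuousOn f (Set.Icc 0 1)) {t : Set ℝ} (ht : IsOpen t) :
    ∃ u, IsOpen u ∧ f ⁻¹' t ∩ Set.Icc (0:ℝ) 1 = u ∩ Set.Icc (0:ℝ) 1 :=
  continuousOn_iff'.1 hf t ht

lemma meas_sep (hf : ContinuousOn f (Set.Icc 0 1)) (y : ℝ) :
    MeasurableSet {x ∈ Set.Icc (0:ℝ) 1 | f x > y} := by
  obtain ⟨u, hu, heq⟩ := exists_open_inter hf isOpen_Ioi (t := Set.Ioi y)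
  rw [sep_eq_inter, heq]
  exact hu.measurableSet.inter measurableSet_Icc

lemma nudist_le_one (y : ℝ) : nudist f y ≤ 1 := by
  have : volume {x ∈ Set.Icc (0:ℝ) 1 | f x > y} ≤ volume (Set.Icc (0:ℝ) 1) :=
    measure_mono (fun x hx => hx.1)
  simpa [nudist, Real.volume_Icc] using this

lemma nudist_ne_top (y : ℝ) : nudist f y ≠ ⊤ :=
  ne_top_of_le_ne_top (by norm_num) (nudist_le_one y)

lemma nudist_antitone : Antitone (nudist f) := fun y₁ y₂ h =>
  measure_mono (fun x hx => ⟨hx.1, lt_of_le_of_lt h hx.2⟩)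

lemma mudist_nonneg (y : ℝ) : 0 ≤ mudist f y := ENNReal.toReal_nonneg

lemma mudist_le_one (y : ℝ) : mudist f y ≤ 1 := by
  have := ENNReal.toReal_mono (by norm_num) (nudist_le_one (f := f) y)
  simpa [mudist] using this

lemma mudist_antitone : Antitone (mudist f) := fun y₁ y₂ h =>
  ENNReal.toReal_mono (nudist_ne_top y₁) (nudist_antitone h)

/-- Right continuity of the distribution function, in inequality form. -/
lemma mudist_right_cont {y x : ℝ} (hx : 0 ≤ x)
    (h : ∀ ε > 0, mudist f (y + ε) ≤ x) : mudist f y ≤ x := by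
  have hUnion : {z ∈ Set.Icc (0:ℝ) 1 | f z > y}
      = ⋃ n : ℕ, {z ∈ Set.Icc (0:ℝ) 1 | f z > y + 1 / (n + 1)} := by
    ext z
    simp only [Set.mem_iUnion, Set.mem_sep_iff]
    constructor
    · rintro ⟨hz, hfz⟩
      obtain ⟨n, hn⟩ := exists_nat_one_div_lt (sub_pos.2 hfz)
      exact ⟨n, hz, by linarith⟩
    · rintro ⟨n, hz, hfz⟩
      have hp : (0:ℝ) < 1 / ((n:ℝ) + 1) := by positivity
      exact ⟨hz, by linarith⟩
  have hmono : Monotone (fun n : ℕ => {z ∈ Set.Icc (0:ℝ) 1 | f z > y + 1 / (n + 1)}) := by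
    intro n₁ n₂ hn z hz
    refine ⟨hz.1, lt_of_le_of_lt ?_ hz.2⟩
    have h1 : (0:ℝ) < n₁ + 1 := by positivity
    have h2 : (n₁:ℝ) + 1 ≤ n₂ + 1 := by exact_mod_cast by omega
    gcongr
  have key : nudist f y ≤ ENNReal.ofReal x := by
    rw [show nudist f y = volume {z ∈ Set.Icc (0:ℝ) 1 | f z > y} from rfl, hUnion,
      hmono.measure_iUnion]
    refine iSup_le fun n => ?_
    have h1 : mudist f (y + 1 / (n + 1)) ≤ x := h _ (by positivity)
    have h2 : nudist f (y + 1 / ((n:ℝ) + 1)) ≤ ENNReal.ofReal x := by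
      rw [← ENNReal.ofReal_toReal (nudist_ne_top (f := f) (y + 1 / ((n:ℝ) + 1)))]
      exact ENNReal.ofReal_le_ofReal h1
    exact h2
  calc mudist f y = (nudist f y).toReal := rfl
    _ ≤ (ENNReal.ofReal x).toReal := ENNReal.toReal_mono ENNReal.ofReal_ne_top key
    _ = x := ENNReal.toReal_ofReal hx

end Aux

theorem exists_decreasing_rearrangement (f : ℝ → ℝ) (hf : ContinuousOn f (Set.Icc 0 1)) :
    ∃ g : ℝ → ℝ, ContinuousOn g (Set.Icc 0 1) ∧ AntitoneOn g (Set.Icc 0 1) ∧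
      ∀ y : ℝ, volume {x ∈ Set.Icc (0:ℝ) 1 | f x > y} = volume {x ∈ Set.Icc (0:ℝ) 1 | g x > y} := by
  classical
  set I : Set ℝ := Set.Icc 0 1 with hI
  have hIne : I.Nonempty := ⟨0, by simp [hI]⟩
  have hIK : IsCompact I := isCompact_Icc
  have hK : IsCompact (f '' I) := hIK.image_of_continuousOn hf
  have hKne : (f '' I).Nonempty := hIne.image f
  set m : ℝ := sInf (f '' I) with hm
  set M : ℝ := sSup (f '' I) with hM
  have hmem_m : m ∈ f '' I := hK.isClosed.csInf_mem hKne hK.bddBelow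
  have hmem_M : M ∈ f '' I := hK.isClosed.csSup_mem hKne hK.bddAbove
  have hfm : ∀ x ∈ I, m ≤ f x := fun x hx => csInf_le hK.bddBelow ⟨x, hx, rfl⟩
  have hfM : ∀ x ∈ I, f x ≤ M := fun x hx => le_csSup hK.bddAbove ⟨x, hx, rfl⟩
  have hmM : m ≤ M := by
    obtain ⟨x, hx, hfx⟩ := hmem_m
    exact hfx ▸ hfM x hx
  -- every value in [m, M] is attained
  have hattain : ∀ w ∈ Set.Icc m M, ∃ x ∈ I, f x = w := by
    intro w hw
    obtain ⟨p, hp, hfp⟩ := hmem_m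
    obtain ⟨q, hq, hfq⟩ := hmem_M
    have hsub : Set.uIcc p q ⊆ I := by
      rw [Set.uIcc_eq_union]
      exact Set.union_subset (Set.Icc_subset_Icc hp.1 hq.2) (Set.Icc_subset_Icc hq.1 hp.2)
    have := intermediate_value_uIcc (hf.mono hsub)
    have hw' : w ∈ Set.uIcc (f p) (f q) := by
      rw [hfp, hfq, Set.uIcc_of_le hmM]; exact hw
    obtain ⟨x, hx, hfx⟩ := this hw'
    exact ⟨x, hsub hx, hfx⟩
  -- strict monotonicity of the distribution function on [m, M]
  have hstrict : ∀ y₁ y₂, m ≤ y₁ → y₁ < y₂ → y₂ ≤ M → nudist f y₂ < nudist f y₁ := by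
    intro y₁ y₂ hy₁ h12 hy₂
    obtain ⟨x₀, hx₀, hfx₀⟩ := hattain ((y₁ + y₂) / 2) ⟨by linarith, by linarith⟩
    -- the set where y₁ < f < y₂ has positive measure
    obtain ⟨u, hu, hequ⟩ := exists_open_inter hf isOpen_Ioo (t := Set.Ioo y₁ y₂)
    have hx₀u : x₀ ∈ u := by
      have : x₀ ∈ f ⁻¹' Set.Ioo y₁ y₂ ∩ I := ⟨⟨by simp [hfx₀]; linarith, by simp [hfx₀]; linarith⟩, hx₀⟩
      rw [hequ] at this
      exact this.1
    obtain ⟨δ, hδ, hball⟩ := Metric.isOpen_iff.1 hu x₀ hx₀u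
    set c : ℝ := max 0 (x₀ - δ) with hc
    set d : ℝ := min 1 (x₀ + δ) with hd
    have hcd : c < d := by
      have h1 := hx₀.1; have h2 := hx₀.2
      apply max_lt <;> [skip; skip] <;> apply lt_min <;> linarith
    have hIoosub : Set.Ioo c d ⊆ f ⁻¹' Set.Ioo y₁ y₂ ∩ I := by
      rw [hequ]
      intro z hz
      have hz1 : 0 < z := lt_of_le_of_lt (le_max_left _ _) hz.1
      have hz2 : z < 1 := lt_of_lt_of_le hz.2 (min_le_left _ _)
      have hz3 : x₀ - δ < z := lt_of_le_of_lt (le_max_right _ _) hz.1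
      have hz4 : z < x₀ + δ := lt_of_lt_of_le hz.2 (min_le_right _ _)
      refine ⟨hball ?_, hz1.le, hz2.le⟩
      rw [Metric.mem_ball, Real.dist_eq, abs_lt]
      constructor <;> linarith
    have hUpos : 0 < volume (f ⁻¹' Set.Ioo y₁ y₂ ∩ I) := by
      calc (0:ENNReal) < ENNReal.ofReal (d - c) := by
            simp [ENNReal.ofReal_pos]; linarith
        _ = volume (Set.Ioo c d) := (Real.volume_Ioo).symm
        _ ≤ _ := measure_mono hIoosub
    -- superadditivity
    have hdisj : Disjoint (f ⁻¹' Set.Ioo y₁ y₂ ∩ I) {x ∈ I | f x > y₂} := by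
      rw [Set.disjoint_left]
      rintro z ⟨hz1, _⟩ hz2
      exact absurd hz2.2 (not_lt.2 hz1.2.le)
    have hsub2 : (f ⁻¹' Set.Ioo y₁ y₂ ∩ I) ∪ {x ∈ I | f x > y₂} ⊆ {x ∈ I | f x > y₁} := by
      rintro z (⟨hz1, hz2⟩ | hz)
      · exact ⟨hz2, hz1.1⟩
      · exact ⟨hz.1, lt_trans h12 hz.2⟩
    have := measure_union (μ := volume) hdisj (meas_sep hf y₂)
    have hle : volume (f ⁻¹' Set.Ioo y₁ y₂ ∩ I) + volume {x ∈ I | f x > y₂}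
        ≤ volume {x ∈ I | f x > y₁} := by
      rw [← this]
      exact measure_mono hsub2
    have := ENNReal.lt_add_right (nudist_ne_top (f := f) y₂) (ne_of_gt hUpos)
    calc nudist f y₂ < nudist f y₂ + volume (f ⁻¹' Set.Ioo y₁ y₂ ∩ I) := this
      _ = volume (f ⁻¹' Set.Ioo y₁ y₂ ∩ I) + nudist f y₂ := add_comm _ _
      _ ≤ nudist f y₁ := hle
  have hstrictμ : ∀ y₁ y₂, m ≤ y₁ → y₁ < y₂ → y₂ ≤ M → mudist f y₂ < mudist f y₁ := by
    intro y₁ y₂ h1 h2 h3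
    exact ENNReal.toReal_strict_mono (nudist_ne_top y₁) (hstrict y₁ y₂ h1 h2 h3)
  -- the distribution function vanishes at M
  have hnuM : nudist f M = 0 := by
    have : {x ∈ I | f x > M} = ∅ := by
      ext z; simp only [Set.mem_sep_iff, Set.mem_empty_iff_false, iff_false, not_and, not_lt]
      exact fun hz => hfM z hz
    rw [nudist, ← hI, this, measure_empty]
  have hμM : mudist f M = 0 := by rw [mudist, hnuM]; simp
  -- define the rearrangement
  set S : ℝ → Set ℝ := fun x => {y | m ≤ y ∧ mudist f y ≤ x} with hS
  set g : ℝ → ℝ := fun x => sInf (S x) with hg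
  have hSne : ∀ x, 0 ≤ x → (S x).Nonempty := fun x hx => ⟨M, hmM, by rw [hμM]; exact hx⟩
  have hSbdd : ∀ x, BddBelow (S x) := fun x => ⟨m, fun y hy => hy.1⟩
  have hgm : ∀ x, 0 ≤ x → m ≤ g x := fun x hx => le_csInf (hSne x hx) (fun y hy => hy.1)
  have hgM : ∀ x, 0 ≤ x → g x ≤ M := fun x hx => csInf_le (hSbdd x) ⟨hmM, by rw [hμM]; exact hx⟩
  -- key equivalence
  have hkey : ∀ x y, 0 ≤ x → m ≤ y → (g x > y ↔ mudist f y > x) := by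
    intro x y hx hy
    constructor
    · intro h
      by_contra hμ
      push_neg at hμ
      exact absurd (csInf_le (hSbdd x) ⟨hy, hμ⟩) (not_le.2 h)
    · intro h
      have hε : ∃ ε > 0, mudist f (y + ε) > x := by
        by_contra hc
        push_neg at hc
        have hx0 : (0:ℝ) ≤ x := hx
        exact absurd (mudist_right_cont hx0 hc) (not_le.2 h)
      obtain ⟨ε, hε0, hεx⟩ := hε
      have : y + ε ≤ g x := by
        apply le_csInf (hSne x hx)
        intro y' hy'
        by_contra hlt
        push_neg at hlt
        have := mudist_antitone (f := f) hlt.le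
        exact absurd hy'.2 (not_le.2 (lt_of_lt_of_le hεx this))
      linarith
  -- antitone
  have hganti : AntitoneOn g I := by
    intro x₁ hx₁ x₂ hx₂ h12
    exact csInf_le_csInf (hSbdd x₂) (hSne x₁ hx₁.1) (fun y hy => ⟨hy.1, hy.2.trans h12⟩)
  -- surjectivity onto [m, M]
  have hsurj : Set.SurjOn g I (Set.Icc m M) := by
    intro v hv
    set x : ℝ := mudist f v with hx
    have hx0 : 0 ≤ x := mudist_nonneg v
    have hx1 : x ≤ 1 := mudist_le_one v
    refine ⟨x, ⟨hx0, hx1⟩, ?_⟩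
    have h1 : g x ≤ v := csInf_le (hSbdd x) ⟨hv.1, le_refl x⟩
    have h2 : v ≤ g x := by
      apply le_csInf (hSne x hx0)
      intro y' hy'
      by_contra hlt
      push_neg at hlt
      have := hstrictμ y' v hy'.1 hlt hv.2
      exact absurd hy'.2 (not_le.2 this)
    exact le_antisymm h1 h2
  -- continuity
  have hcont : ContinuousOn g I := by
    apply antitoneOn_surjOn_continuousOn hganti
    apply hsurj.mono (le_refl I).subset
    intro v hv
    refine ⟨(hgm 1 zero_le_one).trans hv.1, hv.2.trans (hgM 0 (le_refl 0))⟩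
  refine ⟨g, hcont, hganti, ?_⟩
  intro y
  rcases lt_or_ge y m with hym | hym
  · have h1 : {x ∈ I | f x > y} = I := by
      ext z; simp only [Set.mem_sep_iff, and_iff_left_iff_imp]
      exact fun hz => lt_of_lt_of_le hym (hfm z hz)
    have h2 : {x ∈ I | g x > y} = I := by
      ext z; simp only [Set.mem_sep_iff, and_iff_left_iff_imp]
      exact fun hz => lt_of_lt_of_le hym (hgm z hz.1)
    rw [h1, h2]
  · have h2 : {x ∈ I | g x > y} = Set.Ico 0 (mudist f y) := by
      ext z
      simp only [Set.mem_sep_iff, Set.mem_Ico]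
      constructor
      · rintro ⟨hz, hgz⟩
        exact ⟨hz.1, (hkey z y hz.1 hym).1 hgz⟩
      · rintro ⟨hz0, hzμ⟩
        have hz1 : z ≤ 1 := le_trans hzμ.le (mudist_le_one y)
        exact ⟨⟨hz0, hz1⟩, (hkey z y hz0 hym).2 hzμ⟩
    rw [h2, Real.volume_Ico, sub_zero, mudist, ENNReal.ofReal_toReal (nudist_ne_top y)]
    rfl
end

section
/- Let N be a positive natural number, let f : Fin N → ℝ, and let σ be a permutation of Fin N such that the rearranged sequence g = f ∘ σ is antitone (i.e., g j ≤ g i whenever i ≤ j). Then for all indices i < j in Fin N there exist indices m < n in Fin N such that (n : ℕ) − (m : ℕ) ≤ (j : ℕ) − (i : ℕ) and |f m − f n| ≥ g i − g j. -/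
theorem rearrangement_combinatorial (N : ℕ) (hN : 0 < N) (f : Fin N → ℝ)
    (σ : Equiv.Perm (Fin N)) (hg : Antitone (f ∘ σ)) :
    ∀ i j : Fin N, i < j → ∃ m n : Fin N, m < n ∧
      (n : ℕ) - (m : ℕ) ≤ (j : ℕ) - (i : ℕ) ∧
      |f m - f n| ≥ (f ∘ σ) i - (f ∘ σ) j := by
  intro i j hij
  classical
  set A : Finset (Fin N) := (Finset.Iic i).image σ with hAdef
  set B : Finset (Fin N) := (Finset.Ici j).image σ with hBdef
  have hAcard : A.card = (i : ℕ) + 1 := by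
    rw [hAdef, Finset.card_image_of_injective _ σ.injective, Fin.card_Iic]
  have hBcard : B.card = N - (j : ℕ) := by
    rw [hBdef, Finset.card_image_of_injective _ σ.injective, Fin.card_Ici]
  have hAB : Disjoint A B := by
    rw [Finset.disjoint_left]
    rintro x hx hx'
    obtain ⟨k, hk, rfl⟩ := Finset.mem_image.mp hx
    obtain ⟨l, hl, hlk⟩ := Finset.mem_image.mp hx'
    have hlkk : l = k := σ.injective hlk
    subst hlkk
    exact absurd (lt_of_lt_of_le hij (Finset.mem_Ici.mp hl))
      (not_lt.mpr (Finset.mem_Iic.mp hk))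
  have hfA : ∀ x ∈ A, (f ∘ σ) i ≤ f x := by
    intro x hx
    obtain ⟨k, hk, rfl⟩ := Finset.mem_image.mp hx
    exact hg (Finset.mem_Iic.mp hk)
  have hfB : ∀ x ∈ B, f x ≤ (f ∘ σ) j := by
    intro x hx
    obtain ⟨k, hk, rfl⟩ := Finset.mem_image.mp hx
    exact hg (Finset.mem_Ici.mp hk)
  have hne : (A ×ˢ B).Nonempty := ⟨(σ i, σ j), Finset.mem_product.mpr
    ⟨Finset.mem_image_of_mem _ (Finset.mem_Iic.mpr le_rfl),
     Finset.mem_image_of_mem _ (Finset.mem_Ici.mpr le_rfl)⟩⟩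
  obtain ⟨p, hpmem, hmin⟩ :=
    Finset.exists_min_image _ (fun p : Fin N × Fin N => Nat.dist (p.1 : ℕ) (p.2 : ℕ)) hne
  obtain ⟨a, b⟩ := p
  obtain ⟨ha, hb⟩ := Finset.mem_product.mp hpmem
  have hane : a ≠ b := fun h => (Finset.disjoint_left.mp hAB ha) (h ▸ hb)
  have hjN : (j : ℕ) < N := j.isLt
  -- general cardinality bound for the open interval between a and b
  have hIcard : ∀ lo hi : Fin N, lo < hi →
      (∀ c ∈ Finset.Ioo lo hi, c ∉ A ∪ B) →
      ((hi : ℕ) - (lo : ℕ)) ≤ (j : ℕ) - (i : ℕ) := by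
    intro lo hi hlh hdisj
    have hdisj' : Disjoint (A ∪ B) (Finset.Ioo lo hi) := by
      rw [Finset.disjoint_right]
      intro c hc
      exact hdisj c hc
    have hcard : ((A ∪ B) ∪ Finset.Ioo lo hi).card ≤ N := by
      calc ((A ∪ B) ∪ Finset.Ioo lo hi).card ≤ (Finset.univ : Finset (Fin N)).card :=
            Finset.card_le_univ _
        _ = N := by simp
    rw [Finset.card_union_of_disjoint hdisj', Finset.card_union_of_disjoint hAB,
      hAcard, hBcard, Fin.card_Ioo] at hcard
    have hlh' : (lo : ℕ) < (hi : ℕ) := hlh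
    omega
  have hdist : Nat.dist (a : ℕ) (b : ℕ) ≤ (j : ℕ) - (i : ℕ) := by
    rcases hane.lt_or_gt with hab | hab
    · have hd : ∀ c ∈ Finset.Ioo a b, c ∉ A ∪ B := by
        intro c hc hcAB
        obtain ⟨h1, h2⟩ := Finset.mem_Ioo.mp hc
        have h1' : (a : ℕ) < (c : ℕ) := h1
        have h2' : (c : ℕ) < (b : ℕ) := h2
        rcases Finset.mem_union.mp hcAB with hcA | hcB
        · have := hmin (c, b) (Finset.mem_product.mpr ⟨hcA, hb⟩)
          simp only [Nat.dist] at this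
          omega
        · have := hmin (a, c) (Finset.mem_product.mpr ⟨ha, hcB⟩)
          simp only [Nat.dist] at this
          omega
      have := hIcard a b hab hd
      have hab' : (a : ℕ) < (b : ℕ) := hab
      simp only [Nat.dist]
      omega
    · have hd : ∀ c ∈ Finset.Ioo b a, c ∉ A ∪ B := by
        intro c hc hcAB
        obtain ⟨h1, h2⟩ := Finset.mem_Ioo.mp hc
        have h1' : (b : ℕ) < (c : ℕ) := h1
        have h2' : (c : ℕ) < (a : ℕ) := h2
        rcases Finset.mem_union.mp hcAB with hcA | hcB
        · have := hmin (c, b) (Finset.mem_product.mpr ⟨hcA, hb⟩)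
          simp only [Nat.dist] at this
          omega
        · have := hmin (a, c) (Finset.mem_product.mpr ⟨ha, hcB⟩)
          simp only [Nat.dist] at this
          omega
      have := hIcard b a hab hd
      have hab' : (b : ℕ) < (a : ℕ) := hab
      simp only [Nat.dist]
      omega
  have hval : (f ∘ σ) i - (f ∘ σ) j ≤ f a - f b :=
    sub_le_sub (hfA a ha) (hfB b hb)
  rcases hane.lt_or_gt with hab | hab
  · refine ⟨a, b, hab, ?_, ?_⟩
    · have hab' : (a : ℕ) < (b : ℕ) := hab
      simp only [Nat.dist] at hdist
      omega
    · exact le_trans hval (le_abs_self _)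
  · refine ⟨b, a, hab, ?_, ?_⟩
    · have hab' : (b : ℕ) < (a : ℕ) := hab
      simp only [Nat.dist] at hdist
      omega
    · rw [abs_sub_comm]
      exact le_trans hval (le_abs_self _)
end

section
/- Let N be a positive natural number, let f : Fin N → ℝ, and let σ be a permutation of Fin N such that the rearranged sequence g = f ∘ σ is antitone. Let d be a natural number and ε ≥ 0 a real number. If |f m − f n| ≤ ε for all m, n : Fin N with |(m : ℤ) − (n : ℤ)| ≤ d, then |g i − g j| ≤ ε for all i, j : Fin N with |(i : ℤ) − (j : ℤ)| ≤ d. In other words, the decreasing rearrangement of a finite sequence obeys every modulus of uniformity that the original sequence obeys. -/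
lemma close_pair_of_large_sets (N d : ℕ) (A B : Finset ℕ) (hA : A.Nonempty) (hB : B.Nonempty)
    (hsub : ∀ x ∈ A ∪ B, x < N) (hdisj : Disjoint A B)
    (hcard : N + 1 ≤ A.card + B.card + d) :
    ∃ a ∈ A, ∃ b ∈ B, |(a : ℤ) - b| ≤ d := by
  by_contra h
  push_neg at h
  obtain ⟨p, hp, hmin⟩ := (A ×ˢ B).exists_min_image
    (fun p => ((p.1 : ℤ) - p.2).natAbs) (hA.product hB)
  rw [Finset.mem_product] at hp
  obtain ⟨ha, hb⟩ := hp
  set a := p.1 with hadef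
  set b := p.2 with hbdef
  have hfar : ∀ x ∈ A, ∀ y ∈ B, d < ((x : ℤ) - y).natAbs := by
    intro x hx y hy
    have h2 := h x hx y hy
    rw [Int.abs_eq_natAbs] at h2
    omega
  have hab : d < ((a : ℤ) - b).natAbs := hfar a ha b hb
  set lo := min a b with hlo
  set hi := max a b with hhi
  have hdisj2 : Disjoint (A ∪ B) (Finset.Ioo lo hi) := by
    rw [Finset.disjoint_left]
    intro x hx hx2
    rw [Finset.mem_Ioo] at hx2
    rcases Finset.mem_union.mp hx with hxA | hxB
    · have := hmin (x, b) (Finset.mem_product.mpr ⟨hxA, hb⟩)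
      simp only at this
      omega
    · have := hmin (a, x) (Finset.mem_product.mpr ⟨ha, hxB⟩)
      simp only at this
      omega
  have hsub2 : (A ∪ B) ∪ Finset.Ioo lo hi ⊆ Finset.range N := by
    intro x hx
    rw [Finset.mem_range]
    rcases Finset.mem_union.mp hx with hx | hx
    · exact hsub x hx
    · rw [Finset.mem_Ioo] at hx
      have : hi < N := by
        rcases max_choice a b with h' | h'
        · rw [hhi, h']; exact hsub a (Finset.mem_union_left _ ha)
        · rw [hhi, h']; exact hsub b (Finset.mem_union_right _ hb)
      omega
  have hc := Finset.card_le_card hsub2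
  rw [Finset.card_union_of_disjoint hdisj2, Finset.card_union_of_disjoint hdisj,
    Finset.card_range, Nat.card_Ioo] at hc
  omega

theorem rearrangement_modulus_of_uniformity (N : ℕ) (hN : 0 < N) (f : Fin N → ℝ)
    (σ : Equiv.Perm (Fin N)) (hg : Antitone (f ∘ σ)) (d : ℕ) (ε : ℝ) (hε : 0 ≤ ε)
    (hf : ∀ m n : Fin N, |((m : ℕ) : ℤ) - ((n : ℕ) : ℤ)| ≤ (d : ℤ) → |f m - f n| ≤ ε) :
    ∀ i j : Fin N, |((i : ℕ) : ℤ) - ((j : ℕ) : ℤ)| ≤ (d : ℤ) →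
      |(f ∘ σ) i - (f ∘ σ) j| ≤ ε := by
  -- key: for i ≤ j with close indices, g i - g j ≤ ε
  have key : ∀ i j : Fin N, i < j → ((j : ℤ) - i ≤ d) → (f ∘ σ) i - (f ∘ σ) j ≤ ε := by
    intro i j hij hd
    set A : Finset ℕ := (Finset.Iic i).image (fun k => (σ k : ℕ)) with hA
    set B : Finset ℕ := (Finset.Ici j).image (fun k => (σ k : ℕ)) with hB
    have hinj : Function.Injective (fun k : Fin N => (σ k : ℕ)) := by
      intro x y hxy
      exact σ.injective (Fin.val_injective hxy)
    have hcardA : A.card = (i : ℕ) + 1 := by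
      rw [hA, Finset.card_image_of_injective _ hinj, Fin.card_Iic]
    have hcardB : B.card = N - (j : ℕ) := by
      rw [hB, Finset.card_image_of_injective _ hinj, Fin.card_Ici]
    have hdisj : Disjoint A B := by
      rw [hA, hB]
      rw [Finset.disjoint_left]
      rintro x hx hy
      obtain ⟨p, hp, rfl⟩ := Finset.mem_image.mp hx
      obtain ⟨q, hq, hqx⟩ := Finset.mem_image.mp hy
      have : p = q := hinj hqx ▸ rfl
      rw [Finset.mem_Iic] at hp
      rw [Finset.mem_Ici] at hq
      have : q = p := hinj hqx
      have : j ≤ i := le_trans (this ▸ hq) hp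
      exact absurd hij (not_lt.mpr this)
    obtain ⟨a, ha, b, hb, habd⟩ := close_pair_of_large_sets N d A B
      ⟨(σ i : ℕ), Finset.mem_image.mpr ⟨i, Finset.mem_Iic.mpr le_rfl, rfl⟩⟩
      ⟨(σ j : ℕ), Finset.mem_image.mpr ⟨j, Finset.mem_Ici.mpr le_rfl, rfl⟩⟩
      (by
        intro x hx
        rcases Finset.mem_union.mp hx with hx | hx <;>
        · obtain ⟨p, _, rfl⟩ := Finset.mem_image.mp hx
          exact (σ p).isLt)
      hdisj
      (by
        rw [hcardA, hcardB]
        have := j.isLt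
        omega)
    obtain ⟨p, hp, rfl⟩ := Finset.mem_image.mp ha
    obtain ⟨q, hq, rfl⟩ := Finset.mem_image.mp hb
    rw [Finset.mem_Iic] at hp
    rw [Finset.mem_Ici] at hq
    have h1 : (f ∘ σ) i ≤ (f ∘ σ) p := hg hp
    have h2 : (f ∘ σ) q ≤ (f ∘ σ) j := hg hq
    have h3 : |f (σ p) - f (σ q)| ≤ ε := hf (σ p) (σ q) habd
    have h4 : f (σ p) - f (σ q) ≤ ε := le_trans (le_abs_self _) h3
    simp only [Function.comp_apply] at h1 h2 ⊢
    linarith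
  intro i j hd
  rcases lt_trichotomy i j with h | h | h
  · have : (f ∘ σ) j ≤ (f ∘ σ) i := hg h.le
    rw [abs_of_nonneg (by linarith)]
    exact key i j h (by rw [abs_sub_comm] at hd; exact le_trans (le_abs_self _) hd)
  · simp [h, hε]
  · have : (f ∘ σ) i ≤ (f ∘ σ) j := hg h.le
    rw [abs_of_nonpos (by linarith)]
    have := key j i h (le_trans (le_abs_self _) hd)
    linarith
end

section
/- Let f : ℝ → ℝ, let x, d : ℝ. Then f has derivative d at x (HasDerivAt f d x) if and only if for every nonzero infinitesimal hyperreal ε, the hyperreal difference quotient (f*(x + ε) − f x) / ε is infinitely close to d, i.e., IsSt ((f* (x + ε) − (f x : ℝ*)) / ε) d. In particular, the derivative is the standard part (shadow) of the ratio of infinitesimal increments. -/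
open Hyperreal

noncomputable def naturalExtension (f : ℝ → ℝ) : ℝ* → ℝ* :=
  fun y => Filter.Germ.map f y

open Filter Topology in
theorem hasDerivAt_iff_isSt_difference_quotient (f : ℝ → ℝ) (x d : ℝ) :
    HasDerivAt f d x ↔
      ∀ dx : ℝ*, Infinitesimal dx → dx ≠ 0 →
        IsSt ((naturalExtension f ((x : ℝ*) + dx) - (f x : ℝ*)) / dx) d := by
  constructor
  · intro h dx hdx hne
    rcases ofSeq_surjective dx with ⟨g, rfl⟩
    have key : (naturalExtension f ((x : ℝ*) + ofSeq g) - (f x : ℝ*)) / ofSeq g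
        = ofSeq (fun n => (f (x + g n) - f x) / g n) := rfl
    rw [key, isSt_ofSeq_iff_tendsto]
    have hg0 : Tendsto g (hyperfilter ℕ) (𝓝 0) := by
      have := isSt_ofSeq_iff_tendsto.1 hdx
      simpa using this
    have hgne : ∀ᶠ n in (hyperfilter ℕ : Filter ℕ), g n ≠ 0 := by
      by_contra hc
      apply hne
      have : ∀ᶠ n in (hyperfilter ℕ : Filter ℕ), g n = 0 :=
        (Ultrafilter.eventually_or.1 (by
          filter_upwards with n; exact em (g n = 0))).resolve_right hc
      exact Filter.Germ.coe_eq.2 this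
    have hslope := hasDerivAt_iff_tendsto_slope.1 h
    have htend : Tendsto (fun n => x + g n) (hyperfilter ℕ : Filter ℕ) (𝓝[≠] x) := by
      rw [tendsto_nhdsWithin_iff]
      constructor
      · have : Tendsto (fun n => x + g n) (hyperfilter ℕ : Filter ℕ) (𝓝 (x + 0)) :=
          tendsto_const_nhds.add hg0
        simpa using this
      · filter_upwards [hgne] with n hn
        simp [hn]
    have := hslope.comp htend
    refine this.congr' ?_
    filter_upwards with n
    simp [Function.comp, slope_def_field, add_sub_cancel_left]
  · intro H
    rw [hasDerivAt_iff_tendsto_slope]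
    by_contra hT
    rw [Metric.tendsto_nhdsWithin_nhds] at hT
    push_neg at hT
    obtain ⟨eps, heps, hy⟩ := hT
    choose y hy1 hy2 hy3 using fun n : ℕ => hy (1 / (n + 1)) (by positivity)
    set g : ℕ → ℝ := fun n => y n - x with hg
    have hg0 : Tendsto g atTop (𝓝 0) := by
      rw [tendsto_iff_dist_tendsto_zero]
      refine squeeze_zero (fun n => dist_nonneg) (fun n => ?_)
        (tendsto_one_div_add_atTop_nhds_zero_nat)
      have := hy2 n
      simp only [Real.dist_eq, hg, dist_zero_right, Real.norm_eq_abs, sub_zero]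
      rw [Real.dist_eq] at this
      linarith [this]
    have hinf : Infinitesimal (ofSeq g) := isSt_of_tendsto hg0
    have hne : ofSeq g ≠ 0 := by
      intro hc
      have h0 : ∀ᶠ n in (hyperfilter ℕ : Filter ℕ), g n = 0 := Filter.Germ.coe_eq.1 hc
      rcases h0.exists with ⟨n, hn⟩
      exact hy1 n (by simpa [hg, sub_eq_zero] using hn)
    have hst := H (ofSeq g) hinf hne
    have key : (naturalExtension f ((x : ℝ*) + ofSeq g) - (f x : ℝ*)) / ofSeq g
        = ofSeq (fun n => (f (x + g n) - f x) / g n) := rfl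
    rw [key, isSt_ofSeq_iff_tendsto] at hst
    have hev : ∀ᶠ n in (hyperfilter ℕ : Filter ℕ),
        dist ((f (x + g n) - f x) / g n) d < eps := by
      filter_upwards [hst (Metric.ball_mem_nhds d heps)] with n hn
      simpa [Metric.mem_ball] using hn
    rcases hev.exists with ⟨n, hn⟩
    have hslope : slope f x (y n) = (f (x + g n) - f x) / g n := by
      simp [slope_def_field, hg, add_sub_cancel]
    have := hy3 n
    rw [hslope] at this
    linarith [this, hn]
end

section
/- Let f : ℝ → ℝ and x : ℝ. Then f is continuous at x if and only if the natural extension f* maps the halo of x into the halo of f(x); that is, ContinuousAt f x holds if and only if for every hyperreal y with IsSt y x one has IsSt (f* y) (f x). -/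
open Hyperreal

theorem continuousAt_iff_halo (f : ℝ → ℝ) (x : ℝ) :
    ContinuousAt f x ↔ ∀ y : ℝ*, IsSt y x → IsSt (naturalExtension f y) (f x) := by
  constructor
  · intro hf y hy
    exact hy.map hf
  · intro h
    rw [Metric.continuousAt_iff]
    by_contra hc
    push_neg at hc
    obtain ⟨eps, heps, hdel⟩ := hc
    choose u hu1 hu2 using fun n : ℕ => hdel (1 / (n + 1)) (by positivity)
    have htend : Filter.Tendsto u Filter.atTop (nhds x) := by
      rw [Metric.tendsto_atTop]
      intro del hdel'
      obtain ⟨N, hN⟩ := exists_nat_gt (1 / del)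
      refine ⟨N, fun n hn => lt_of_lt_of_le (hu1 n) ?_⟩
      rw [div_le_iff₀ (by positivity)]
      rw [div_lt_iff₀ hdel'] at hN
      have : (N:ℝ) ≤ n := Nat.cast_le.2 hn
      nlinarith
    have hst : IsSt (ofSeq u) x := isSt_of_tendsto htend
    have := h (ofSeq u) hst
    have h2 : IsSt (ofSeq (fun n => f (u n))) (f x) := this
    rw [isSt_ofSeq_iff_tendsto] at h2
    have h3 := h2 (Metric.ball_mem_nhds (f x) heps)
    have h4 : ∀ n, ¬ (f (u n) ∈ Metric.ball (f x) eps) := fun n hn => by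
      rw [Metric.mem_ball] at hn
      exact absurd hn (not_lt.2 (hu2 n))
    simp only [Filter.mem_map, Set.preimage, Set.mem_setOf_eq] at h3
    have : {n | f (u n) ∈ Metric.ball (f x) eps} = ∅ := by
      ext n; simpa using h4 n
    rw [this] at h3
    exact (Filter.empty_notMem _) h3
end

section
/- Let U be a free (non-principal) ultrafilter on ℕ. Then the set S = {x ∈ [0,1] | {n : ℕ | the n-th binary digit of x is 1} ∈ U}, where the n-th binary digit of x is ⌊2^(n+1) · x⌋ mod 2, is not Lebesgue measurable (it is not a null-measurable set for the volume measure on ℝ). -/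
open MeasureTheory Set
open scoped ENNReal NNReal

namespace UltraNM

/-- Dyadic rationals. -/
def D : Set ℝ := ⋃ m : ℕ, Set.range (fun z : ℤ => (z : ℝ) / 2 ^ m)

lemma volume_D : volume D = 0 :=
  (Set.countable_iUnion fun _ => Set.countable_range _).measure_zero _

lemma not_mem_D_iff {x : ℝ} : x ∉ D ↔ ∀ (m : ℕ) (z : ℤ), 2 ^ m * x ≠ (z : ℝ) := by
  simp only [D, Set.mem_iUnion, Set.mem_range, not_exists]
  constructor
  · intro h m z hz
    exact h m z (by field_simp; linarith [hz])
  · intro h m z hz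
    refine h m z ?_
    rw [← hz]
    field_simp

lemma floor_sub {t : ℝ} (ht : ∀ z : ℤ, t ≠ (z : ℝ)) (m : ℤ) :
    ⌊(m : ℝ) - t⌋ = m - ⌊t⌋ - 1 := by
  have h1 : (⌊t⌋ : ℝ) < t := lt_of_le_of_ne (Int.floor_le t) (Ne.symm (ht ⌊t⌋))
  have h2 : t < ⌊t⌋ + 1 := Int.lt_floor_add_one t
  rw [Int.floor_eq_iff]
  constructor
  · push_cast; linarith
  · push_cast; linarith

lemma floor_of_mem_Ico {k d : ℕ} (hd : 0 < d) {t : ℝ} (h1 : (k : ℝ) / d ≤ t)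
    (h2 : t < ((k : ℝ) + 1) / d) : ⌊t⌋ = (k / d : ℕ) := by
  have hk : k < d * (k / d) + d := by
    have h3 := Nat.div_add_mod k d
    have h4 := Nat.mod_lt k hd
    omega
  rw [Int.floor_eq_iff]
  refine ⟨?_, ?_⟩
  · have : ((k / d : ℕ) : ℝ) ≤ t := le_trans Nat.cast_div_le h1
    exact_mod_cast this
  · have hd' : (0:ℝ) < d := by exact_mod_cast hd
    have h5 : ((k : ℝ) + 1) / d ≤ ((k / d : ℕ) : ℝ) + 1 := by
      rw [div_le_iff₀ hd']
      have h6 : (k : ℝ) + 1 ≤ ((d * (k/d) + d : ℕ) : ℝ) := by exact_mod_cast hk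
      push_cast at h6
      linarith
    have : t < ((k / d : ℕ) : ℝ) + 1 := lt_of_lt_of_le h2 h5
    exact_mod_cast this

lemma low_digit (n k j : ℕ) (hj : j < n) {x : ℝ}
    (hx1 : (k:ℝ)/2^n ≤ x) (hx2 : x < ((k:ℝ)+1)/2^n) :
    ⌊2^(j+1) * x⌋ = ((k / 2^(n-j-1) : ℕ) : ℤ) := by
  have hd : (0:ℕ) < 2^(n-j-1) := Nat.pow_pos (by norm_num)
  have hcast : ((2^(n-j-1) : ℕ) : ℝ) = (2:ℝ)^(n-j-1) := by push_cast; ring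
  have ha : (0:ℝ) < 2^(j+1) := by positivity
  have hd' : (0:ℝ) < (2:ℝ)^(n-j-1) := by positivity
  have key : (2:ℝ)^(j+1) * 2^(n-j-1) = 2^n := by
    rw [← pow_add]; congr 1; omega
  have h2n : (0:ℝ) < (2:ℝ)^n := by positivity
  apply floor_of_mem_Ico hd
  · rw [hcast, div_le_iff₀ hd']
    have h1 : (k:ℝ) ≤ x * 2^n := by rw [div_le_iff₀ h2n] at hx1; linarith
    have h2 : (2:ℝ)^(j+1) * x * 2^(n-j-1) = x * 2^n := by rw [← key]; ring
    linarith
  · rw [hcast, lt_div_iff₀ hd']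
    have h1 : x * 2^n < (k:ℝ) + 1 := by rw [lt_div_iff₀ h2n] at hx2; linarith
    have h2 : (2:ℝ)^(j+1) * x * 2^(n-j-1) = x * 2^n := by rw [← key]; ring
    linarith

lemma high_digit (n k j : ℕ) (hj : n ≤ j) {x : ℝ} (hxD : x ∉ D) :
    (⌊2^(j+1) * ((2*(k:ℝ)+1)/2^n - x)⌋ % 2 = 1 ↔ ¬ (⌊2^(j+1) * x⌋ % 2 = 1)) := by
  have ht : ∀ z : ℤ, 2^(j+1) * x ≠ (z:ℝ) := fun z => not_mem_D_iff.mp hxD (j+1) z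
  set m : ℤ := (2*k+1) * 2^(j-n) * 2 with hm
  have e : (2:ℝ)^(j+1) = 2^(j-n)*2*2^n := by
    rw [show (2:ℝ)^(j-n)*2*2^n = 2^(j-n)*2^1*2^n from by norm_num, ← pow_add, ← pow_add]
    congr 1; omega
  have hcast : ((m:ℤ):ℝ) = 2^(j+1) * ((2*(k:ℝ)+1)/2^n) := by
    rw [hm]
    push_cast
    rw [e]
    field_simp
  have harg : 2^(j+1) * ((2*(k:ℝ)+1)/2^n - x) = (m:ℝ) - 2^(j+1) * x := by
    rw [mul_sub, hcast]
  rw [harg, floor_sub ht m]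
  obtain ⟨c, hc⟩ : ∃ c : ℤ, m = 2*c := ⟨(2*k+1)*2^(j-n), by rw [hm]; ring⟩
  omega

lemma mem_congr_cofinite (U : Ultrafilter ℕ) (hU : ∀ s : Set ℕ, s.Finite → s ∉ U)
    {s t : Set ℕ} (h : {n | ¬ (n ∈ s ↔ n ∈ t)}.Finite) : s ∈ U ↔ t ∈ U := by
  have hE : {n | n ∈ s ↔ n ∈ t} ∈ U := by
    by_contra hc
    have := Ultrafilter.compl_mem_iff_notMem.mpr hc
    exact hU {n | ¬ (n ∈ s ↔ n ∈ t)} h this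
  constructor
  · intro hs
    exact U.toFilter.mem_of_superset (Filter.inter_mem hs hE)
      (fun n hn => (hn.2).mp hn.1)
  · intro hs
    exact U.toFilter.mem_of_superset (Filter.inter_mem hs hE)
      (fun n hn => (hn.2).mpr hn.1)

lemma reflect_mem (U : Ultrafilter ℕ) (hU : ∀ s : Set ℕ, s.Finite → s ∉ U)
    (n k : ℕ) {x : ℝ} (hxD : x ∉ D) :
    ({j : ℕ | ⌊2^(j+1) * ((2*(k:ℝ)+1)/2^n - x)⌋ % 2 = 1} ∈ U ↔
      {j : ℕ | ⌊2^(j+1) * x⌋ % 2 = 1} ∉ U) := by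
  rw [← Ultrafilter.compl_mem_iff_notMem]
  apply mem_congr_cofinite U hU
  apply Set.Finite.subset (Set.finite_Iio n)
  intro j hj
  simp only [Set.mem_setOf_eq, Set.mem_compl_iff, Set.mem_Iio] at hj ⊢
  by_contra hjn
  push_neg at hjn
  exact hj (high_digit n k j hjn hxD)

def Sset (U : Ultrafilter ℕ) : Set ℝ :=
  {x ∈ Set.Icc (0:ℝ) 1 | {n : ℕ | ⌊2 ^ (n + 1) * x⌋ % 2 = 1} ∈ U}

lemma mem_Ioo_of_Ico {n k : ℕ} {x : ℝ}
    (hx : x ∈ Set.Ico ((k:ℝ)/2^n) (((k:ℝ)+1)/2^n)) (hxD : x ∉ D) :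
    x ∈ Set.Ioo ((k:ℝ)/2^n) (((k:ℝ)+1)/2^n) := by
  refine ⟨lt_of_le_of_ne hx.1 ?_, hx.2⟩
  intro h
  apply not_mem_D_iff.mp hxD n k
  rw [← h]
  field_simp
  norm_cast

lemma refl_Ioo {n k : ℕ} {x : ℝ} (hx : x ∈ Set.Ioo ((k:ℝ)/2^n) (((k:ℝ)+1)/2^n)) :
    (2*(k:ℝ)+1)/2^n - x ∈ Set.Ioo ((k:ℝ)/2^n) (((k:ℝ)+1)/2^n) := by
  obtain ⟨h1, h2⟩ := hx
  have e : (2*(k:ℝ)+1)/2^n = (k:ℝ)/2^n + ((k:ℝ)+1)/2^n := by ring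
  exact ⟨by rw [e]; linarith, by rw [e]; linarith⟩

lemma refl_D {n k : ℕ} {x : ℝ} (hxD : x ∉ D) : (2*(k:ℝ)+1)/2^n - x ∉ D := by
  rw [not_mem_D_iff] at hxD ⊢
  intro m z hz
  apply hxD (m + n) ((2*k+1) * 2^m - 2^n * z)
  have h2n : ((2:ℝ)^n) ≠ 0 := by positivity
  push_cast
  rw [show (2:ℝ)^(m+n) = 2^m * 2^n from pow_add 2 m n]
  have : (2:ℝ)^m * ((2*(k:ℝ)+1)/2^n - x) = (z:ℝ) := hz
  field_simp at this ⊢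
  linarith

lemma Ico_subset_Icc {n k : ℕ} (hk : k < 2^n) :
    Set.Ico ((k:ℝ)/2^n) (((k:ℝ)+1)/2^n) ⊆ Set.Icc (0:ℝ) 1 := by
  intro x hx
  have h2n : (0:ℝ) < (2:ℝ)^n := by positivity
  have hk' : (k:ℝ) + 1 ≤ (2:ℝ)^n := by exact_mod_cast Nat.succ_le_of_lt hk
  constructor
  · have : (0:ℝ) ≤ (k:ℝ)/2^n := by positivity
    linarith [hx.1]
  · have : ((k:ℝ)+1)/2^n ≤ 1 := by rw [div_le_one h2n]; linarith
    linarith [hx.2]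

lemma pointwise (U : Ultrafilter ℕ) (hU : ∀ s : Set ℕ, s.Finite → s ∉ U)
    (n k : ℕ) (hk : k < 2^n) {x : ℝ} (hxD : x ∉ D) :
    ((2*(k:ℝ)+1)/2^n - x) ∈ Sset U ∩ Set.Ico ((k:ℝ)/2^n) (((k:ℝ)+1)/2^n) ↔
      x ∈ Set.Ico ((k:ℝ)/2^n) (((k:ℝ)+1)/2^n) \ Sset U := by
  constructor
  · rintro ⟨hyS, hyI⟩
    have hyD : (2*(k:ℝ)+1)/2^n - x ∉ D := refl_D hxD
    have hyIoo := mem_Ioo_of_Ico hyI hyD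
    have hxIoo : x ∈ Set.Ioo ((k:ℝ)/2^n) (((k:ℝ)+1)/2^n) := by
      have := refl_Ioo hyIoo
      rwa [show (2*(k:ℝ)+1)/2^n - ((2*(k:ℝ)+1)/2^n - x) = x from by ring] at this
    refine ⟨Set.Ioo_subset_Ico_self hxIoo, ?_⟩
    intro hxS
    have hmem := reflect_mem U hU n k hyD
    rw [show (2*(k:ℝ)+1)/2^n - ((2*(k:ℝ)+1)/2^n - x) = x from by ring] at hmem
    have hAx : {j : ℕ | ⌊2^(j+1) * x⌋ % 2 = 1} ∈ U := hxS.2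
    have hAy : {j : ℕ | ⌊2^(j+1) * ((2*(k:ℝ)+1)/2^n - x)⌋ % 2 = 1} ∈ U := hyS.2
    exact (hmem.mp hAx) hAy
  · rintro ⟨hxI, hxS⟩
    have hxIoo := mem_Ioo_of_Ico hxI hxD
    have hyIoo := refl_Ioo hxIoo
    have hyI : (2*(k:ℝ)+1)/2^n - x ∈ Set.Ico ((k:ℝ)/2^n) (((k:ℝ)+1)/2^n) :=
      Set.Ioo_subset_Ico_self hyIoo
    refine ⟨⟨Ico_subset_Icc hk hyI, ?_⟩, hyI⟩
    have hmem := reflect_mem U hU n k hxD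
    refine hmem.mpr ?_
    intro hAx
    exact hxS ⟨Ico_subset_Icc hk hxI, hAx⟩

lemma half_measure (U : Ultrafilter ℕ) (hU : ∀ s : Set ℕ, s.Finite → s ∉ U)
    (hS : NullMeasurableSet (Sset U) volume) (n k : ℕ) (hk : k < 2^n) :
    volume (Sset U ∩ Set.Ico ((k:ℝ)/2^n) (((k:ℝ)+1)/2^n))
      = volume (Set.Ico ((k:ℝ)/2^n) (((k:ℝ)+1)/2^n)) / 2 := by
  set I := Set.Ico ((k:ℝ)/2^n) (((k:ℝ)+1)/2^n) with hI
  set c : ℝ := (2*(k:ℝ)+1)/2^n with hc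
  have MP : MeasurePreserving (fun t : ℝ => c - t) volume volume :=
    Measure.measurePreserving_sub_left volume c
  have hSI : NullMeasurableSet (Sset U ∩ I) volume :=
    hS.inter measurableSet_Ico.nullMeasurableSet
  have e1 : volume ((fun t : ℝ => c - t) ⁻¹' (Sset U ∩ I)) = volume (Sset U ∩ I) :=
    MP.measure_preimage hSI
  have e2 : volume ((fun t : ℝ => c - t) ⁻¹' (Sset U ∩ I)) = volume (I \ Sset U) := by
    apply measure_congr
    rw [Filter.eventuallyEq_set]
    have hD : ∀ᵐ x : ℝ, x ∉ D := measure_eq_zero_iff_ae_notMem.mp volume_D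
    filter_upwards [hD] with x hxD
    exact pointwise U hU n k hk hxD
  have e3 : volume (I ∩ Sset U) + volume (I \ Sset U) = volume I :=
    measure_inter_add_diff₀ I hS
  rw [Set.inter_comm] at e3
  have hfin : volume I ≠ ⊤ := by
    rw [hI, Real.volume_Ico]
    exact ENNReal.ofReal_ne_top
  rw [ENNReal.eq_div_iff (by norm_num) (by norm_num), two_mul]
  rw [← e3, ← e2, e1]

lemma floor_cell (n : ℕ) {x : ℝ} (h0 : 0 ≤ x) (h1 : x < 1) :
    (⌊(2:ℝ)^n * x⌋).toNat < 2^n ∧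
      (((⌊(2:ℝ)^n * x⌋).toNat : ℝ))/2^n ≤ x ∧
      x < (((⌊(2:ℝ)^n * x⌋).toNat : ℝ)+1)/2^n := by
  have h2n : (0:ℝ) < (2:ℝ)^n := by positivity
  have hnn : 0 ≤ ⌊(2:ℝ)^n * x⌋ := Int.floor_nonneg.mpr (by positivity)
  have hcast : ((((⌊(2:ℝ)^n * x⌋).toNat) : ℤ) : ℝ) = ((⌊(2:ℝ)^n * x⌋ : ℤ) : ℝ) := by
    exact_mod_cast congrArg (fun z : ℤ => (z:ℝ)) (Int.toNat_of_nonneg hnn)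
  have hfl : ((⌊(2:ℝ)^n * x⌋ : ℤ) : ℝ) ≤ 2^n * x := Int.floor_le _
  have hfl2 : (2:ℝ)^n * x < ((⌊(2:ℝ)^n * x⌋ : ℤ) : ℝ) + 1 := Int.lt_floor_add_one _
  have hlt : ⌊(2:ℝ)^n * x⌋ < (2^n : ℤ) := by
    rw [Int.floor_lt]
    push_cast
    nlinarith
  refine ⟨?_, ?_, ?_⟩
  · have hltn : ⌊(2:ℝ)^n * x⌋ < ((2^n : ℕ) : ℤ) := by exact_mod_cast hlt
    omega
  · rw [div_le_iff₀ h2n]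
    have : (((⌊(2:ℝ)^n * x⌋).toNat : ℕ) : ℝ) = ((⌊(2:ℝ)^n * x⌋ : ℤ) : ℝ) := by
      exact_mod_cast hcast
    rw [this]
    linarith
  · rw [lt_div_iff₀ h2n]
    have : (((⌊(2:ℝ)^n * x⌋).toNat : ℕ) : ℝ) = ((⌊(2:ℝ)^n * x⌋ : ℤ) : ℝ) := by
      exact_mod_cast hcast
    rw [this]
    linarith

lemma cell_subset (n k : ℕ) (hk : k < 2^n) {x : ℝ}
    (hx : x ∈ Set.Ico ((k:ℝ)/2^n) (((k:ℝ)+1)/2^n)) :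
    ∃ k' : ℕ, k' < 2^(n+1) ∧ x ∈ Set.Ico ((k':ℝ)/2^(n+1)) (((k':ℝ)+1)/2^(n+1)) ∧
      Set.Ico ((k':ℝ)/2^(n+1)) (((k':ℝ)+1)/2^(n+1)) ⊆
        Set.Ico ((k:ℝ)/2^n) (((k:ℝ)+1)/2^n) := by
  have h2n : (0:ℝ) < (2:ℝ)^n := by positivity
  have h0 : 0 ≤ x := le_trans (by positivity) hx.1
  have h1 : x < 1 := by
    have hk1 : ((k:ℝ)+1)/2^n ≤ 1 := by
      rw [div_le_one h2n]
      exact_mod_cast Nat.succ_le_of_lt hk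
    linarith [hx.2]
  obtain ⟨hlt, hle, hlt2⟩ := floor_cell (n+1) h0 h1
  refine ⟨(⌊(2:ℝ)^(n+1) * x⌋).toNat, hlt, ⟨hle, hlt2⟩, ?_⟩
  have hxl : (k:ℝ) ≤ x * 2^n := by
    have := hx.1; rw [div_le_iff₀ h2n] at this; exact this
  have hxu : x * 2^n < (k:ℝ) + 1 := by rw [← lt_div_iff₀ h2n]; exact hx.2
  have h2n1 : (0:ℝ) < (2:ℝ)^(n+1) := by positivity
  have hnn : 0 ≤ ⌊(2:ℝ)^(n+1) * x⌋ := Int.floor_nonneg.mpr (by positivity)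
  have hlow : ((2*k : ℕ) : ℤ) ≤ ⌊(2:ℝ)^(n+1) * x⌋ := by
    rw [Int.le_floor]
    push_cast
    rw [pow_succ]
    nlinarith
  have hup : ⌊(2:ℝ)^(n+1) * x⌋ < ((2*k+2 : ℕ) : ℤ) := by
    rw [Int.floor_lt]
    push_cast
    rw [pow_succ]
    nlinarith
  have hklow : 2*k ≤ (⌊(2:ℝ)^(n+1) * x⌋).toNat := by omega
  have hkup : (⌊(2:ℝ)^(n+1) * x⌋).toNat ≤ 2*k+1 := by omega
  have hklowR : (2*(k:ℝ)) ≤ ((⌊(2:ℝ)^(n+1) * x⌋).toNat : ℝ) := by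
    exact_mod_cast hklow
  have hkupR : ((⌊(2:ℝ)^(n+1) * x⌋).toNat : ℝ) ≤ 2*(k:ℝ)+1 := by
    exact_mod_cast hkup
  apply Set.Ico_subset_Ico
  · rw [div_le_div_iff₀ h2n h2n1]
    nlinarith [hklowR, h2n.le, pow_succ (2:ℝ) n]
  · rw [div_le_div_iff₀ h2n1 h2n]
    nlinarith [hkupR, h2n.le, pow_succ (2:ℝ) n]

theorem main (U : Ultrafilter ℕ) (hU : ∀ s : Set ℕ, s.Finite → s ∉ U) :
    ¬ NullMeasurableSet (Sset U) (volume : Measure ℝ) := by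
  intro hS
  have h00 := half_measure U hU hS 0 0 (by norm_num)
  have hIco0 : Set.Ico (((0:ℕ):ℝ)/2^0) ((((0:ℕ):ℝ)+1)/2^0) = Set.Ico (0:ℝ) 1 := by
    norm_num
  rw [hIco0] at h00
  have hvol01 : volume (Set.Ico (0:ℝ) 1) = 1 := by
    rw [Real.volume_Ico]; norm_num
  rw [hvol01] at h00
  have hSsub : Sset U ⊆ (Sset U ∩ Set.Ico (0:ℝ) 1) ∪ {(1:ℝ)} := by
    intro x hx
    rcases lt_or_eq_of_le hx.1.2 with h | h
    · exact Or.inl ⟨hx, hx.1.1, h⟩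
    · exact Or.inr (by simp [h])
  have hle : volume (Sset U) ≤ 1/2 := by
    calc volume (Sset U) ≤ volume ((Sset U ∩ Set.Ico (0:ℝ) 1) ∪ {(1:ℝ)}) :=
          measure_mono hSsub
      _ ≤ volume (Sset U ∩ Set.Ico (0:ℝ) 1) + volume ({(1:ℝ)} : Set ℝ) :=
          measure_union_le _ _
      _ = 1/2 + 0 := by rw [h00, Real.volume_singleton]
      _ = 1/2 := add_zero _
  have h1234 : (1:ℝ≥0∞)/2 < 3/4 := by
    have e1 : ENNReal.ofReal ((1:ℝ)/2) = (1:ℝ≥0∞)/2 := by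
      rw [ENNReal.ofReal_div_of_pos (by norm_num)]
      simp [ENNReal.ofReal_one, ENNReal.ofReal_ofNat]
    have e2 : ENNReal.ofReal ((3:ℝ)/4) = (3:ℝ≥0∞)/4 := by
      rw [ENNReal.ofReal_div_of_pos (by norm_num)]
      simp [ENNReal.ofReal_ofNat]
    rw [← e1, ← e2]
    exact (ENNReal.ofReal_lt_ofReal_iff (by norm_num)).mpr (by norm_num)
  obtain ⟨O, hSO, hOopen, hOlt⟩ := Set.exists_isOpen_lt_of_lt (Sset U) (3/4)
    (lt_of_le_of_lt hle h1234)
  set K : ℕ → Set ℕ := fun n =>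
    {k | k < 2^n ∧ Set.Ico ((k:ℝ)/2^n) (((k:ℝ)+1)/2^n) ⊆ O} with hK
  set A : ℕ → Set ℝ := fun n =>
    ⋃ k ∈ K n, Set.Ico ((k:ℝ)/2^n) (((k:ℝ)+1)/2^n) with hA
  have hdisj : ∀ n, (K n).PairwiseDisjoint
      (fun k : ℕ => Set.Ico ((k:ℝ)/2^n) (((k:ℝ)+1)/2^n)) := by
    intro n
    have key : ∀ a b : ℕ, a < b →
        Disjoint (Set.Ico ((a:ℝ)/2^n) (((a:ℝ)+1)/2^n))
          (Set.Ico ((b:ℝ)/2^n) (((b:ℝ)+1)/2^n)) := by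
      intro a b hab
      rw [Set.disjoint_left]
      rintro x ⟨_, hxa2⟩ ⟨hxb1, _⟩
      have h1 : ((a:ℝ)+1)/2^n ≤ (b:ℝ)/2^n := by
        gcongr
        exact_mod_cast hab
      linarith
    intro a ha b hb hab
    rcases hab.lt_or_gt with h | h
    · exact key a b h
    · exact (key b a h).symm
  have bound : ∀ n, volume (Sset U ∩ A n) ≤ volume O / 2 := by
    intro n
    have hc : (K n).Countable := Set.to_countable _
    have hAsub : A n ⊆ O := by
      rw [hA]
      exact Set.iUnion₂_subset (fun k hk => hk.2)
    calc volume (Sset U ∩ A n)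
        = volume (⋃ k ∈ K n, Sset U ∩ Set.Ico ((k:ℝ)/2^n) (((k:ℝ)+1)/2^n)) := by
          rw [hA, Set.inter_iUnion₂]
      _ ≤ ∑' k : K n, volume (Sset U ∩ Set.Ico (((k:ℕ):ℝ)/2^n) ((((k:ℕ):ℝ)+1)/2^n)) :=
          measure_biUnion_le volume hc _
      _ = ∑' k : K n, volume (Set.Ico (((k:ℕ):ℝ)/2^n) ((((k:ℕ):ℝ)+1)/2^n)) / 2 := by
          exact tsum_congr (fun k => half_measure U hU hS n k k.2.1)
      _ = (∑' k : K n, volume (Set.Ico (((k:ℕ):ℝ)/2^n) ((((k:ℕ):ℝ)+1)/2^n))) / 2 := by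
          simp only [div_eq_mul_inv, ENNReal.tsum_mul_right]
      _ = volume (A n) / 2 := by
          rw [hA, measure_biUnion hc (hdisj n) (fun k _ => measurableSet_Ico)]
      _ ≤ volume O / 2 := by gcongr
  have hmono : Monotone A := by
    apply monotone_nat_of_le_succ
    intro n x hx
    rw [hA] at hx ⊢
    obtain ⟨k, hk, hxk⟩ := Set.mem_iUnion₂.mp hx
    obtain ⟨k', hk', hxk', hsub'⟩ := cell_subset n k hk.1 hxk
    exact Set.mem_iUnion₂.mpr ⟨k', ⟨hk', hsub'.trans hk.2⟩, hxk'⟩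
  have cover : Sset U ∩ Set.Ico (0:ℝ) 1 ⊆ ⋃ n, A n := by
    rintro x ⟨hxS, hxI⟩
    have hxO := hSO hxS
    rw [Metric.isOpen_iff] at hOopen
    obtain ⟨ε, hε, hball⟩ := hOopen x hxO
    obtain ⟨n, hn⟩ := exists_pow_lt_of_lt_one hε (by norm_num : (1:ℝ)/2 < 1)
    obtain ⟨hk, hle2, hlt2⟩ := floor_cell n hxI.1 hxI.2
    have hlen : ((1:ℝ)/2)^n = 1/2^n := by rw [div_pow, one_pow]
    have hsubO : Set.Ico (((⌊(2:ℝ)^n * x⌋).toNat : ℝ)/2^n)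
        ((((⌊(2:ℝ)^n * x⌋).toNat : ℝ)+1)/2^n) ⊆ O := by
      intro y hy
      apply hball
      rw [Metric.mem_ball, Real.dist_eq, abs_lt]
      have hdiff : ((((⌊(2:ℝ)^n * x⌋).toNat : ℝ))+1)/2^n
          - (((⌊(2:ℝ)^n * x⌋).toNat : ℝ))/2^n = 1/2^n := by ring
      constructor
      · have := hy.1
        have := hlt2
        linarith [hn, hlen.symm.le]
      · have := hy.2
        have := hle2
        linarith [hn, hlen.symm.le]
    refine Set.mem_iUnion.mpr ⟨n, ?_⟩
    rw [hA]
    exact Set.mem_iUnion₂.mpr ⟨_, ⟨hk, hsubO⟩, hle2, hlt2⟩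
  have h2 : (1:ℝ≥0∞)/2 ≤ volume O / 2 := by
    calc (1:ℝ≥0∞)/2 = volume (Sset U ∩ Set.Ico (0:ℝ) 1) := h00.symm
      _ ≤ volume (Sset U ∩ ⋃ n, A n) :=
          measure_mono (fun x hx => ⟨hx.1, cover hx⟩)
      _ = ⨆ n, volume (Sset U ∩ A n) := by
          rw [Set.inter_iUnion]
          exact Monotone.measure_iUnion
            (fun a b hab => Set.inter_subset_inter_right _ (hmono hab))
      _ ≤ volume O / 2 := iSup_le bound
  have h3 : (1:ℝ≥0∞) ≤ volume O := by
    have hm := mul_le_mul_left h2 2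
    rwa [ENNReal.div_mul_cancel (by norm_num) (by norm_num),
      ENNReal.div_mul_cancel (by norm_num) (by norm_num)] at hm
  have h41 : (3:ℝ≥0∞)/4 < 1 := by
    have e2 : ENNReal.ofReal ((3:ℝ)/4) = (3:ℝ≥0∞)/4 := by
      rw [ENNReal.ofReal_div_of_pos (by norm_num)]
      simp [ENNReal.ofReal_ofNat]
    rw [← e2, show (1:ℝ≥0∞) = ENNReal.ofReal 1 from ENNReal.ofReal_one.symm]
    exact (ENNReal.ofReal_lt_ofReal_iff (by norm_num)).mpr (by norm_num)
  exact absurd h3 (not_le.mpr (hOlt.trans h41))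

end UltraNM

theorem ultrafilter_set_not_measurable (U : Ultrafilter ℕ)
    (hU : ∀ s : Set ℕ, s.Finite → s ∉ U) :
    ¬ NullMeasurableSet
      {x ∈ Set.Icc (0:ℝ) 1 | {n : ℕ | ⌊2 ^ (n + 1) * x⌋ % 2 = 1} ∈ U}
      (volume : Measure ℝ) := by
  exact UltraNM.main U hU
end

section
/- Leibniz's product rule via the transcendental law of homogeneity: let u, v : ℝ → ℝ, let x, u', v' : ℝ, and suppose u has derivative u' at x and v has derivative v' at x. Then for every nonzero infinitesimal hyperreal ε, the hyperreal quotient (u*(x + ε) · v*(x + ε) − u x · v x) / ε is infinitely close to u x · v' + v x · u', i.e., its standard part equals u x · v' + v x · u'. -/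
open Hyperreal

lemma slope_isSt (f : ℝ → ℝ) (x f' : ℝ) (hf : HasDerivAt f f' x)
    (dx : ℝ*) (h1 : Infinitesimal dx) (h2 : dx ≠ 0) :
    IsSt ((naturalExtension f ((x : ℝ*) + dx) - ((f x : ℝ) : ℝ*)) / dx) f' := by
  obtain ⟨d, rfl⟩ := ofSeq_surjective dx
  have hslope : Filter.Tendsto (slope f x) (nhdsWithin x {x}ᶜ) (nhds f') :=
    hasDerivAt_iff_tendsto_slope.mp hf
  have hd0 : Filter.Tendsto d (Filter.hyperfilter ℕ) (nhds 0) := by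
    have := isSt_ofSeq_iff_tendsto.mp h1
    simpa using this
  have hne : ∀ᶠ n in Filter.hyperfilter ℕ, d n ≠ 0 := by
    refine Ultrafilter.eventually_not.mpr fun h => h2 ?_
    exact Filter.Germ.coe_eq.mpr h
  have hxd : Filter.Tendsto (fun n => x + d n) (Filter.hyperfilter ℕ)
      (nhdsWithin x {x}ᶜ) := by
    refine tendsto_nhdsWithin_iff.mpr ⟨?_, ?_⟩
    · have : Filter.Tendsto (fun n => x + d n) (Filter.hyperfilter ℕ) (nhds (x + 0)) :=
        Filter.Tendsto.const_add x hd0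
      simpa using this
    · filter_upwards [hne] with n hn
      simp [hn]
  have hcomp : Filter.Tendsto (fun n => slope f x (x + d n)) (Filter.hyperfilter ℕ)
      (nhds f') := hslope.comp hxd
  have key : IsSt (ofSeq (fun n => (f (x + d n) - f x) / d n)) f' := by
    apply isSt_ofSeq_iff_tendsto.mpr
    refine hcomp.congr' ?_
    filter_upwards [hne] with n hn
    simp [slope, hn, div_eq_inv_mul]
  convert key using 2
  rfl

theorem leibniz_product_rule (u v : ℝ → ℝ) (x u' v' : ℝ)
    (hu : HasDerivAt u u' x) (hv : HasDerivAt v v' x) :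
    ∀ dx : ℝ*, Infinitesimal dx → dx ≠ 0 →
      IsSt ((naturalExtension u ((x : ℝ*) + dx) * naturalExtension v ((x : ℝ*) + dx)
          - ((u x * v x : ℝ) : ℝ*)) / dx)
        (u x * v' + v x * u') := by
  intro dx h1 h2
  set U := naturalExtension u ((x : ℝ*) + dx) with hU
  set V := naturalExtension v ((x : ℝ*) + dx) with hV
  set Su := (U - ((u x : ℝ) : ℝ*)) / dx with hSu
  set Sv := (V - ((v x : ℝ) : ℝ*)) / dx with hSv
  clear_value U V Su Sv
  have hsu : IsSt Su u' := by rw [hSu, hU]; exact slope_isSt u x u' hu dx h1 h2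
  have hsv : IsSt Sv v' := by rw [hSv, hV]; exact slope_isSt v x v' hv dx h1 h2
  have hUx : U = ((u x : ℝ) : ℝ*) + Su * dx := by
    rw [hSu, div_mul_cancel₀ _ h2]; ring
  have hVx : V = ((v x : ℝ) : ℝ*) + Sv * dx := by
    rw [hSv, div_mul_cancel₀ _ h2]; ring
  have hVst : IsSt V (v x) := by
    rw [hVx]
    have : IsSt (Sv * dx) (v' * 0) := hsv.mul h1
    simpa using (isSt_refl_real (v x)).add this
  have e1 : Su * dx = U - ((u x : ℝ) : ℝ*) := by rw [hSu]; exact div_mul_cancel₀ _ h2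
  have e2 : Sv * dx = V - ((v x : ℝ) : ℝ*) := by rw [hSv]; exact div_mul_cancel₀ _ h2
  have hmain : (U * V - ((u x * v x : ℝ) : ℝ*)) / dx = Su * V + ((u x : ℝ) : ℝ*) * Sv := by
    rw [div_eq_iff h2]
    push_cast
    linear_combination -V * e1 - ((u x : ℝ) : ℝ*) * e2
  rw [hmain]
  have h1' : IsSt (Su * V) (u' * v x) := hsu.mul hVst
  have h2' : IsSt (((u x : ℝ) : ℝ*) * Sv) (u x * v') := (isSt_refl_real (u x)).mul hsv
  have hr : u x * v' + v x * u' = u' * v x + u x * v' := by ring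
  rw [hr]
  exact h1'.add h2'
end

section
/- Let f : ℝ → ℝ be continuous on [0,1] and let g : ℝ → ℝ be continuous on [0,1], antitone on [0,1], and equimeasurable with f on [0,1]. Then g obeys every modulus of uniformity that f obeys: for all real δ > 0 and ε ≥ 0, if |f p − f q| ≤ ε for all p, q ∈ [0,1] with |p − q| ≤ δ, then |g p − g q| ≤ ε for all p, q ∈ [0,1] with |p − q| ≤ δ. -/
open MeasureTheory Set

lemma cross_aux (f : ℝ → ℝ) (hf : ContinuousOn f (Set.Icc 0 1)) {u v y1 y2 : ℝ}
    (hu : u ∈ Set.Icc (0:ℝ) 1) (hv : v ∈ Set.Icc (0:ℝ) 1) (huv : u < v)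
    (hfu : y2 ≤ f u) (hfv : f v ≤ y1) :
    ∃ s t : ℝ, s ∈ Set.Icc (0:ℝ) 1 ∧ t ∈ Set.Icc (0:ℝ) 1 ∧ s ≤ t ∧
      y2 ≤ f s ∧ f t ≤ y1 ∧ ∀ x, s < x → x < t → y1 < f x ∧ f x < y2 := by
  have hsub : Set.Icc u v ⊆ Set.Icc (0:ℝ) 1 := Set.Icc_subset_Icc hu.1 hv.2
  set K : Set ℝ := Set.Icc u v ∩ f ⁻¹' (Set.Ici y2) with hK
  have hKclosed : IsClosed K :=
    (hf.mono hsub).preimage_isClosed_of_isClosed isClosed_Icc isClosed_Ici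
  have hKcomp : IsCompact K :=
    isCompact_Icc.of_isClosed_subset hKclosed Set.inter_subset_left
  have hKne : K.Nonempty := ⟨u, ⟨le_refl u, huv.le⟩, hfu⟩
  set s := sSup K with hs
  have hsK : s ∈ K := hKcomp.sSup_mem hKne
  have hs01 : s ∈ Set.Icc (0:ℝ) 1 := hsub hsK.1
  have hsv : s ≤ v := hsK.1.2
  have hsub2 : Set.Icc s v ⊆ Set.Icc (0:ℝ) 1 := Set.Icc_subset_Icc hs01.1 hv.2
  set K' : Set ℝ := Set.Icc s v ∩ f ⁻¹' (Set.Iic y1) with hK'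
  have hK'closed : IsClosed K' :=
    (hf.mono hsub2).preimage_isClosed_of_isClosed isClosed_Icc isClosed_Iic
  have hK'comp : IsCompact K' :=
    isCompact_Icc.of_isClosed_subset hK'closed Set.inter_subset_left
  have hK'ne : K'.Nonempty := ⟨v, ⟨hsv, le_refl v⟩, hfv⟩
  set t := sInf K' with ht
  have htK' : t ∈ K' := hK'comp.sInf_mem hK'ne
  have ht01 : t ∈ Set.Icc (0:ℝ) 1 := hsub2 htK'.1
  refine ⟨s, t, hs01, ht01, htK'.1.1, hsK.2, htK'.2, ?_⟩
  intro x hsx hxt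
  constructor
  · by_contra hle
    push_neg at hle
    have hxK' : x ∈ K' := ⟨⟨hsx.le, hxt.le.trans htK'.1.2⟩, hle⟩
    exact absurd (csInf_le hK'comp.bddBelow hxK') (not_le.mpr hxt)
  · by_contra hge
    push_neg at hge
    have hxK : x ∈ K := ⟨⟨(hsK.1.1.trans hsx.le), hxt.le.trans htK'.1.2⟩, hge⟩
    exact absurd (le_csSup hKcomp.bddAbove hxK) (not_le.mpr hsx)

lemma key_aux (f g : ℝ → ℝ)
    (hf : ContinuousOn f (Set.Icc 0 1)) (hgc : ContinuousOn g (Set.Icc 0 1))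
    (hga : AntitoneOn g (Set.Icc 0 1))
    (heq : ∀ y : ℝ, volume {x ∈ Set.Icc (0:ℝ) 1 | f x > y}
      = volume {x ∈ Set.Icc (0:ℝ) 1 | g x > y})
    (δ ε : ℝ) (hε : 0 ≤ ε)
    (H : ∀ p ∈ Set.Icc (0:ℝ) 1, ∀ q ∈ Set.Icc (0:ℝ) 1, |p - q| ≤ δ → |f p - f q| ≤ ε)
    (p : ℝ) (hp : p ∈ Set.Icc (0:ℝ) 1) (q : ℝ) (hq : q ∈ Set.Icc (0:ℝ) 1)
    (hpq : p < q) (hd : q - p ≤ δ) : g p - g q ≤ ε := by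
  by_contra hcon
  push_neg at hcon
  set a := g q with ha
  set b := g p with hb
  set θ := (b - a - ε) / 3 with hθ
  have hθpos : 0 < θ := by simp only [hθ]; linarith
  set y1 := a + θ with hy1
  set y2 := b - θ with hy2
  have h12 : y1 < y2 := by simp only [hy1, hy2]; linarith
  -- continuity of g at p : get η2
  obtain ⟨η2, hη2pos, hη2⟩ := Metric.continuousWithinAt_iff.mp (hgc p hp) θ hθpos
  -- continuity of g at q : get η1
  obtain ⟨η1, hη1pos, hη1⟩ := Metric.continuousWithinAt_iff.mp (hgc q hq) θ hθpos
  set m := min (p + η2 / 2) 1 with hm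
  have hmp : p < m := lt_min (by linarith) (lt_of_lt_of_le hpq hq.2)
  have hm0 : 0 < m := lt_of_le_of_lt hp.1 hmp
  set c := q - η1 / 2 with hc
  have hcq : c < q := by simp only [hc]; linarith
  -- lower bound : Icc 0 m ⊆ {g > y2}
  have hlower : Set.Icc (0:ℝ) m ⊆ {x ∈ Set.Icc (0:ℝ) 1 | g x > y2} := by
    intro x hx
    have hx01 : x ∈ Set.Icc (0:ℝ) 1 := ⟨hx.1, hx.2.trans (min_le_right _ _)⟩
    refine ⟨hx01, ?_⟩
    rcases le_or_gt x p with hxp | hxp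
    · have := hga hx01 hp hxp
      simp only [hy2]; linarith
    · have hdist : dist x p < η2 := by
        rw [Real.dist_eq, abs_of_pos (by linarith)]
        have : x ≤ p + η2 / 2 := hx.2.trans (min_le_left _ _)
        linarith
      have := hη2 hx01 hdist
      rw [Real.dist_eq] at this
      have := abs_lt.mp this
      simp only [hy2]; linarith
  -- upper bound : {g > y1} ⊆ Ico 0 c
  have hupper : {x ∈ Set.Icc (0:ℝ) 1 | g x > y1} ⊆ Set.Ico (0:ℝ) c := by
    rintro x ⟨hx01, hgx⟩
    refine ⟨hx01.1, ?_⟩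
    by_contra hxc
    push_neg at hxc
    rcases le_or_gt q x with hqx | hqx
    · have := hga hq hx01 hqx
      simp only [hy1] at hgx; linarith
    · have hdist : dist x q < η1 := by
        rw [Real.dist_eq, abs_of_nonpos (by linarith), hc] at *
        linarith
      have := hη1 hx01 hdist
      rw [Real.dist_eq] at this
      have := abs_lt.mp this
      simp only [hy1] at hgx; linarith
  -- measure bounds for f level sets
  have hμ2 : ENNReal.ofReal m ≤ volume {x ∈ Set.Icc (0:ℝ) 1 | f x > y2} := by
    rw [heq y2]
    calc ENNReal.ofReal m = volume (Set.Icc (0:ℝ) m) := by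
          rw [Real.volume_Icc]; norm_num
      _ ≤ _ := measure_mono hlower
  have hμ1 : volume {x ∈ Set.Icc (0:ℝ) 1 | f x > y1} ≤ ENNReal.ofReal c := by
    rw [heq y1]
    calc volume {x ∈ Set.Icc (0:ℝ) 1 | g x > y1} ≤ volume (Set.Ico (0:ℝ) c) :=
          measure_mono hupper
      _ = ENNReal.ofReal c := by rw [Real.volume_Ico]; norm_num
  -- existence of u with f u > y2
  have hune : {x ∈ Set.Icc (0:ℝ) 1 | f x > y2}.Nonempty := by
    rw [Set.nonempty_iff_ne_empty]
    intro hemp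
    rw [hemp, measure_empty] at hμ2
    simp only [nonpos_iff_eq_zero, ENNReal.ofReal_eq_zero] at hμ2
    linarith
  obtain ⟨u, hu01, hfu⟩ := hune
  -- existence of v with f v ≤ y1
  have hvne : {x ∈ Set.Icc (0:ℝ) 1 | f x ≤ y1}.Nonempty := by
    by_contra hemp
    rw [Set.not_nonempty_iff_eq_empty] at hemp
    have hall : Set.Icc (0:ℝ) 1 ⊆ {x ∈ Set.Icc (0:ℝ) 1 | f x > y1} := by
      intro x hx
      refine ⟨hx, ?_⟩
      by_contra hle
      push_neg at hle
      exact Set.eq_empty_iff_forall_notMem.mp hemp x ⟨hx, hle⟩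
    have h1c : volume (Set.Icc (0:ℝ) 1) ≤ ENNReal.ofReal c :=
      le_trans (measure_mono hall) hμ1
    rw [Real.volume_Icc] at h1c
    norm_num at h1c
    have : c < 1 := lt_of_lt_of_le hcq hq.2
    linarith
  obtain ⟨v, hv01, hfv⟩ := hvne
  -- get crossing points
  have hcross : ∃ s t : ℝ, s ∈ Set.Icc (0:ℝ) 1 ∧ t ∈ Set.Icc (0:ℝ) 1 ∧ s ≤ t ∧
      (y2 ≤ f s ∧ f t ≤ y1 ∨ f s ≤ y1 ∧ y2 ≤ f t) ∧
      ∀ x, s < x → x < t → y1 < f x ∧ f x < y2 := by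
    rcases lt_trichotomy u v with huv | huv | huv
    · obtain ⟨s, t, h1, h2, h3, h4, h5, h6⟩ := cross_aux f hf hu01 hv01 huv hfu.le hfv
      exact ⟨s, t, h1, h2, h3, Or.inl ⟨h4, h5⟩, h6⟩
    · exact absurd (huv ▸ hfu) (not_lt.mpr (hfv.trans h12.le))
    · set f' : ℝ → ℝ := fun x => f (1 - x) with hf'
      have hmapsto : ∀ x ∈ Set.Icc (0:ℝ) 1, 1 - x ∈ Set.Icc (0:ℝ) 1 := by
        intro x hx; constructor <;> [linarith [hx.2]; linarith [hx.1]]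
      have hf'c : ContinuousOn f' (Set.Icc 0 1) :=
        hf.comp ((continuous_const.sub continuous_id).continuousOn) hmapsto
      have hu' : (1 - u) ∈ Set.Icc (0:ℝ) 1 := hmapsto u hu01
      have hv' : (1 - v) ∈ Set.Icc (0:ℝ) 1 := hmapsto v hv01
      obtain ⟨s, t, h1, h2, h3, h4, h5, h6⟩ :=
        cross_aux f' hf'c hu' hv' (by linarith) (by simp [hf']; exact hfu.le)
          (by simp [hf']; exact hfv)
      refine ⟨1 - t, 1 - s, hmapsto t h2, hmapsto s h1, by linarith, ?_, ?_⟩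
      · right
        constructor
        · simpa [hf'] using h5
        · simpa [hf'] using h4
      · intro x hx1 hx2
        have := h6 (1 - x) (by linarith) (by linarith)
        simpa [hf'] using this
  obtain ⟨s, t, hs01, ht01, hst, hcase, hIoo⟩ := hcross
  -- measure argument : t - s ≤ δ
  have hsubset : Set.Ioo s t ∪ {x ∈ Set.Icc (0:ℝ) 1 | f x > y2}
      ⊆ {x ∈ Set.Icc (0:ℝ) 1 | f x > y1} := by
    rintro x (hx | ⟨hx01, hx2⟩)
    · exact ⟨⟨hs01.1.trans hx.1.le, hx.2.le.trans ht01.2⟩, (hIoo x hx.1 hx.2).1⟩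
    · exact ⟨hx01, lt_trans h12 hx2⟩
  have hdisj : Disjoint (Set.Ioo s t) {x ∈ Set.Icc (0:ℝ) 1 | f x > y2} := by
    rw [Set.disjoint_left]
    rintro x hx ⟨_, hx2⟩
    exact absurd hx2 (not_lt.mpr (hIoo x hx.1 hx.2).2.le)
  have hchain : ENNReal.ofReal (t - s) + ENNReal.ofReal m ≤ ENNReal.ofReal c := by
    calc ENNReal.ofReal (t - s) + ENNReal.ofReal m
        ≤ volume (Set.Ioo s t) + volume {x ∈ Set.Icc (0:ℝ) 1 | f x > y2} := by
          rw [Real.volume_Ioo]; exact add_le_add le_rfl hμ2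
      _ = volume (Set.Ioo s t ∪ {x ∈ Set.Icc (0:ℝ) 1 | f x > y2}) :=
          (measure_union' hdisj measurableSet_Ioo).symm
      _ ≤ volume {x ∈ Set.Icc (0:ℝ) 1 | f x > y1} := measure_mono hsubset
      _ ≤ ENNReal.ofReal c := hμ1
  rw [← ENNReal.ofReal_add (by linarith) hm0.le, ENNReal.ofReal_le_ofReal_iff'] at hchain
  have htsδ : t - s ≤ δ := by
    rcases hchain with h | h
    · linarith
    · linarith
  -- contradiction with modulus of f
  have hHst := H s hs01 t ht01 (by rw [abs_of_nonpos (by linarith)]; linarith)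
  have : ε + θ ≤ |f s - f t| := by
    rcases hcase with ⟨h1, h2⟩ | ⟨h1, h2⟩
    · rw [abs_of_nonneg (by simp only [hy1, hy2] at h1 h2 ⊢; linarith)]
      simp only [hy1, hy2] at h1 h2 ⊢; linarith
    · rw [abs_of_nonpos (by simp only [hy1, hy2] at h1 h2 ⊢; linarith)]
      simp only [hy1, hy2] at h1 h2 ⊢; linarith
  linarith

theorem rearrangement_modulus_of_uniformity_continuous (f g : ℝ → ℝ)
    (hf : ContinuousOn f (Set.Icc 0 1)) (hgc : ContinuousOn g (Set.Icc 0 1))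
    (hga : AntitoneOn g (Set.Icc 0 1))
    (heq : ∀ y : ℝ, volume {x ∈ Set.Icc (0:ℝ) 1 | f x > y}
      = volume {x ∈ Set.Icc (0:ℝ) 1 | g x > y}) :
    ∀ δ : ℝ, 0 < δ → ∀ ε : ℝ, 0 ≤ ε →
      (∀ p ∈ Set.Icc (0:ℝ) 1, ∀ q ∈ Set.Icc (0:ℝ) 1, |p - q| ≤ δ → |f p - f q| ≤ ε) →
      ∀ p ∈ Set.Icc (0:ℝ) 1, ∀ q ∈ Set.Icc (0:ℝ) 1, |p - q| ≤ δ → |g p - g q| ≤ ε := by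
  intro δ hδ ε hε H p hp q hq hpq
  rcases lt_trichotomy p q with h | h | h
  · have hd : q - p ≤ δ := by rw [abs_of_nonpos (by linarith)] at hpq; linarith
    have hkey := key_aux f g hf hgc hga heq δ ε hε H p hp q hq h hd
    have hge : g q ≤ g p := hga hp hq h.le
    rw [abs_of_nonneg (by linarith)]
    exact hkey
  · rw [h, sub_self, abs_zero]; exact hε
  · have hd : p - q ≤ δ := by rw [abs_of_nonneg (by linarith)] at hpq; linarith
    have hkey := key_aux f g hf hgc hga heq δ ε hε H q hq p hp h hd
    have hge : g p ≤ g q := hga hq hp h.le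
    rw [abs_of_nonpos (by linarith)]
    linarith
end
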